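/- arXiv:math/0703687 — 6 statements merged into one kernel-verified Lean document; each statement's English description precedes it below -/
import Mathlib

section
/- For all r in (0,1), the complete elliptic integral of the first kind satisfies the Landen identity: K(2√r/(1+r)) = (1+r)·K(r). -/
open MeasureTheory Set Real

noncomputable def ellK (r : ℝ) : ℝ :=
  ∫ θ in (0:ℝ)..(Real.pi/2), 1 / Real.sqrt (1 - r^2 * Real.sin θ ^ 2)

lemma ellK_eq_algebraic (k : ℝ) :
    ellK k = ∫ x in Set.Ioo (0:ℝ) 1, 1 / Real.sqrt ((1 - x^2) * (1 - k^2 * x^2)) := by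
  have hpi : (0:ℝ) < Real.pi / 2 := by positivity
  have himg : Real.sin '' Set.Ioo 0 (Real.pi/2) = Set.Ioo (0:ℝ) 1 := by
    apply Set.Subset.antisymm
    · rintro y ⟨θ, hθ, rfl⟩
      refine ⟨Real.sin_pos_of_pos_of_lt_pi hθ.1 (by linarith [hθ.2, Real.pi_pos]), ?_⟩
      have := Real.strictMonoOn_sin (a := θ) (b := Real.pi/2)
        ⟨by linarith [hθ.1], le_of_lt hθ.2⟩ ⟨by linarith, le_refl _⟩ hθ.2
      simpa using this
    · have h2 := intermediate_value_Ioo (a := (0:ℝ)) (b := Real.pi/2) hpi.le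
        (Real.continuous_sin.continuousOn)
      simpa using h2
  have hinj : Set.InjOn Real.sin (Set.Ioo 0 (Real.pi/2)) := by
    apply Real.strictMonoOn_sin.injOn.mono
    intro θ hθ
    exact ⟨by linarith [hθ.1, Real.pi_pos], hθ.2.le⟩
  have hderiv : ∀ θ ∈ Set.Ioo 0 (Real.pi/2),
      HasDerivWithinAt Real.sin (Real.cos θ) (Set.Ioo 0 (Real.pi/2)) θ :=
    fun θ _ => (Real.hasDerivAt_sin θ).hasDerivWithinAt
  rw [ellK, intervalIntegral.integral_of_le hpi.le, MeasureTheory.integral_Ioc_eq_integral_Ioo,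
    ← himg,
    MeasureTheory.integral_image_eq_integral_abs_deriv_smul measurableSet_Ioo hderiv hinj]
  apply MeasureTheory.setIntegral_congr_fun measurableSet_Ioo
  intro θ hθ
  have hcos : 0 < Real.cos θ :=
    Real.cos_pos_of_mem_Ioo ⟨by linarith [hθ.1, Real.pi_pos], hθ.2⟩
  have h1 : 1 - Real.sin θ ^ 2 = Real.cos θ ^ 2 := (Real.cos_sq' θ).symm
  simp only [smul_eq_mul, abs_of_pos hcos]
  rw [h1, show Real.cos θ ^ 2 * (1 - k^2 * Real.sin θ ^ 2)
      = Real.cos θ ^ 2 * (1 - k^2 * Real.sin θ ^ 2) from rfl,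
    Real.sqrt_mul (sq_nonneg _), Real.sqrt_sq hcos.le]
  rcases eq_or_ne (Real.sqrt (1 - k^2 * Real.sin θ ^ 2)) 0 with h | h
  · simp [h]
  · field_simp

theorem landen_identity (r : ℝ) (hr : r ∈ Set.Ioo (0:ℝ) 1) :
    ellK (2 * Real.sqrt r / (1 + r)) = (1 + r) * ellK r := by
  obtain ⟨hr0, hr1⟩ := hr
  have hr1' : (0:ℝ) < 1 + r := by linarith
  set k₁ : ℝ := 2 * Real.sqrt r / (1 + r) with hk₁
  have hk1sq : k₁ ^ 2 = 4 * r / (1 + r)^2 := by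
    rw [hk₁, div_pow, mul_pow, Real.sq_sqrt hr0.le]; ring_nf
  set φ : ℝ → ℝ := fun x => (1 + r) * x / (1 + r * x^2) with hφ
  set φ' : ℝ → ℝ := fun x => (1 + r) * (1 - r * x^2) / (1 + r * x^2)^2 with hφ'
  have hD : ∀ x : ℝ, x ∈ Set.Icc (0:ℝ) 1 → (0:ℝ) < 1 + r * x^2 := by
    intro x hx; nlinarith [hx.1, hx.2]
  have himg : φ '' Set.Ioo 0 1 = Set.Ioo (0:ℝ) 1 := by
    apply Set.Subset.antisymm
    · rintro y ⟨x, hx, rfl⟩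
      have hDx := hD x ⟨hx.1.le, hx.2.le⟩
      constructor
      · apply div_pos (by nlinarith [hx.1]) hDx
      · rw [div_lt_one hDx]
        nlinarith [mul_pos (sub_pos.2 hx.2) (show (0:ℝ) < 1 - r * x by nlinarith [hx.1, hx.2])]
    · have hcont : ContinuousOn φ (Set.Icc 0 1) := by
        apply ContinuousOn.div (by fun_prop) (by fun_prop)
        intro x hx; exact (hD x hx).ne'
      have h2 := intermediate_value_Ioo (a := (0:ℝ)) (b := 1) zero_le_one hcont
      have h0 : φ 0 = 0 := by simp [hφ]
      have h1 : φ 1 = 1 := by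
        simp only [hφ, one_pow, mul_one]
        field_simp
      rw [h0, h1] at h2; exact h2
  have hinj : Set.InjOn φ (Set.Ioo 0 1) := by
    intro x hx y hy h
    have hDx := hD x ⟨hx.1.le, hx.2.le⟩
    have hDy := hD y ⟨hy.1.le, hy.2.le⟩
    simp only [hφ] at h
    rw [div_eq_div_iff hDx.ne' hDy.ne'] at h
    have h3 : (x - y) * (1 - r * x * y) = 0 := by
      have h4 : (1 + r) * ((x - y) * (1 - r * x * y)) = 0 := by linear_combination h
      have := mul_eq_zero.1 h4
      rcases this with h5 | h5
      · linarith
      · exact h5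
    rcases mul_eq_zero.1 h3 with h5 | h5
    · linarith
    · have hxy : x * y < 1 := lt_trans (mul_lt_of_lt_one_right hx.1 hy.2) hx.2
      nlinarith [mul_pos hx.1 hy.1]
  have hderiv : ∀ x ∈ Set.Ioo (0:ℝ) 1, HasDerivWithinAt φ (φ' x) (Set.Ioo 0 1) x := by
    intro x hx
    have hDx := hD x ⟨hx.1.le, hx.2.le⟩
    have h1 : HasDerivAt (fun x : ℝ => (1 + r) * x) (1 + r) x := by
      simpa using (hasDerivAt_id x).const_mul (1 + r)
    have h2 : HasDerivAt (fun x : ℝ => 1 + r * x^2) (r * (2 * x)) x := by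
      have := ((hasDerivAt_pow 2 x).const_mul r).const_add 1
      simpa using this
    have h3 := h1.div h2 hDx.ne'
    convert h3.hasDerivWithinAt using 1
    · rfl
    · rfl
    · rfl
    rw [hφ', div_eq_div_iff (by positivity) (by positivity)]
    ring
  have cov := MeasureTheory.integral_image_eq_integral_abs_deriv_smul measurableSet_Ioo
    hderiv hinj (fun y => 1 / Real.sqrt ((1 - y^2) * (1 - k₁^2 * y^2)))
  rw [himg] at cov
  rw [ellK_eq_algebraic, ellK_eq_algebraic, cov, ← MeasureTheory.integral_const_mul]
  apply MeasureTheory.setIntegral_congr_fun measurableSet_Ioo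
  intro x hx
  have hx0 := hx.1
  have hx1 := hx.2
  have hDx : (0:ℝ) < 1 + r * x^2 := hD x ⟨hx0.le, hx1.le⟩
  have hP : (0:ℝ) < 1 - r * x^2 := by nlinarith
  have hS : (0:ℝ) < (1 - x^2) * (1 - r^2 * x^2) :=
    mul_pos (by nlinarith) (by nlinarith)
  have hφ'pos : 0 < φ' x := by
    apply div_pos (by nlinarith) (by positivity)
  have key : (1 - (φ x)^2) * (1 - k₁^2 * (φ x)^2)
      = ((1 - x^2) * (1 - r^2 * x^2)) * ((1 - r * x^2) / (1 + r * x^2)^2)^2 := by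
    rw [hk1sq]
    simp only [hφ]
    field_simp
    ring
  have hc : (0:ℝ) ≤ (1 - r * x^2) / (1 + r * x^2)^2 := by positivity
  have hsqrt : Real.sqrt ((1 - (φ x)^2) * (1 - k₁^2 * (φ x)^2))
      = Real.sqrt ((1 - x^2) * (1 - r^2 * x^2)) * ((1 - r * x^2) / (1 + r * x^2)^2) := by
    rw [key, Real.sqrt_mul hS.le, Real.sqrt_sq hc]
  have hsS : 0 < Real.sqrt ((1 - x^2) * (1 - r^2 * x^2)) := Real.sqrt_pos.2 hS
  simp only [smul_eq_mul, abs_of_pos hφ'pos, hsqrt]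
  rw [hφ']
  field_simp
end

section
/- For x, y > 0, the logarithmic mean is at most the arithmetic-geometric mean: L(x,y) ≤ AG(x,y). -/
noncomputable def agmSeq (x y : ℝ) : ℕ → ℝ × ℝ
  | 0 => (x, y)
  | n+1 => (((agmSeq x y n).1 + (agmSeq x y n).2)/2,
      Real.sqrt ((agmSeq x y n).1 * (agmSeq x y n).2))

noncomputable def AG (x y : ℝ) : ℝ :=
  Filter.limUnder Filter.atTop fun n => (agmSeq x y n).1

noncomputable def Lmean (x y : ℝ) : ℝ :=
  if x = y then x else (x - y) / Real.log (x / y)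

open Real Filter

lemma myHasDerivAt_tanh (x : ℝ) : HasDerivAt Real.tanh (1 - Real.tanh x ^ 2) x := by
  have h := (Real.hasDerivAt_sinh x).div (Real.hasDerivAt_cosh x) (Real.cosh_pos x).ne'
  have he : Real.tanh = fun x => Real.sinh x / Real.cosh x :=
    funext fun x => Real.tanh_eq_sinh_div_cosh x
  rw [he]
  convert h using 1
  have hc := (Real.cosh_pos x).ne'
  have h1 := Real.cosh_sq_sub_sinh_sq x
  show 1 - (Real.sinh x / Real.cosh x) ^ 2 = _
  field_simp
  all_goals rfl

lemma mySinh_le_mul_cosh {x : ℝ} (hx : 0 ≤ x) : Real.sinh x ≤ x * Real.cosh x := by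
  have hder : ∀ s : ℝ, HasDerivAt (fun s => s * Real.cosh s - Real.sinh s)
      (1 * Real.cosh s + s * Real.sinh s - Real.cosh s) s := fun s =>
    ((hasDerivAt_id s).mul (Real.hasDerivAt_cosh s)).sub (Real.hasDerivAt_sinh s)
  have hmono : MonotoneOn (fun s => s * Real.cosh s - Real.sinh s) (Set.Ici 0) := by
    apply monotoneOn_of_deriv_nonneg (convex_Ici 0)
    · exact Continuous.continuousOn (by continuity)
    · intro s _; exact (hder s).differentiableAt.differentiableWithinAt
    · intro s hs
      rw [interior_Ici] at hs
      rw [(hder s).deriv]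
      have : 0 ≤ s * Real.sinh s :=
        mul_nonneg (le_of_lt hs) (Real.sinh_nonneg_iff.2 (le_of_lt hs))
      nlinarith
  have h0 := hmono (Set.self_mem_Ici (a := (0:ℝ))) (Set.mem_Ici.2 hx) hx
  simp at h0
  nlinarith [h0]

lemma myTanh_nonneg {x : ℝ} (hx : 0 ≤ x) : 0 ≤ Real.tanh x := by
  rw [Real.tanh_eq_sinh_div_cosh]
  exact div_nonneg (Real.sinh_nonneg_iff.2 hx) (Real.cosh_pos x).le

lemma myTanh_lt_one {x : ℝ} : Real.tanh x < 1 := by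
  rw [Real.tanh_eq_sinh_div_cosh, div_lt_one (Real.cosh_pos x)]
  nlinarith [Real.cosh_sub_sinh x, Real.exp_pos (-x)]

lemma myTanh_le_self {x : ℝ} (hx : 0 ≤ x) : Real.tanh x ≤ x := by
  rw [Real.tanh_eq_sinh_div_cosh, div_le_iff₀ (Real.cosh_pos x)]
  exact mySinh_le_mul_cosh hx

lemma myTanh_double (s : ℝ) :
    Real.tanh s = 2 * Real.tanh (s/2) / (1 + Real.tanh (s/2) ^ 2) := by
  have hC := Real.cosh_pos (s/2)
  have hs : s = 2 * (s/2) := by ring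
  rw [Real.tanh_eq_sinh_div_cosh, Real.tanh_eq_sinh_div_cosh]
  rw [hs, Real.sinh_two_mul, Real.cosh_two_mul]
  have h1 := Real.cosh_sq_sub_sinh_sq (s/2)
  field_simp

lemma key_ineq {t : ℝ} (ht : 0 ≤ t) :
    Real.log (Real.cosh t) ≤ t * Real.tanh (t/2) := by
  have hder : ∀ s : ℝ, HasDerivAt (fun s => s * Real.tanh (s/2) - Real.log (Real.cosh s))
      (1 * Real.tanh (s/2) + s * ((1 - Real.tanh (s/2) ^ 2) * (2⁻¹ * 1)) -
        Real.sinh s / Real.cosh s) s := by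
    intro s
    have h1 : HasDerivAt (fun s : ℝ => Real.tanh (s/2)) ((1 - Real.tanh (s/2) ^ 2) * (2⁻¹ * 1)) s := by
      have h0 : HasDerivAt (fun s : ℝ => s / 2) (2⁻¹ * 1) s := by
        simpa using (hasDerivAt_id s).div_const 2
      exact (myHasDerivAt_tanh (s/2)).comp s h0
    have h2 := (hasDerivAt_id s).mul h1
    have h3 : HasDerivAt (fun s : ℝ => Real.log (Real.cosh s)) (Real.sinh s / Real.cosh s) s :=
      (Real.hasDerivAt_cosh s).log (Real.cosh_pos s).ne'
    exact h2.sub h3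
  have hmono : MonotoneOn (fun s => s * Real.tanh (s/2) - Real.log (Real.cosh s)) (Set.Ici 0) := by
    apply monotoneOn_of_deriv_nonneg (convex_Ici 0)
    · exact fun s _ => ((hder s).differentiableAt.continuousAt).continuousWithinAt
    · intro s _; exact (hder s).differentiableAt.differentiableWithinAt
    · intro s hs
      rw [interior_Ici] at hs
      have hs' : (0:ℝ) < s := hs
      rw [(hder s).deriv]
      set u := Real.tanh (s/2) with hu
      have hu0 : 0 ≤ u := myTanh_nonneg (by linarith : (0:ℝ) ≤ s/2)
      have hu1 : u < 1 := myTanh_lt_one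
      have hus : u ≤ s/2 := myTanh_le_self (by linarith : (0:ℝ) ≤ s/2)
      have htd : Real.sinh s / Real.cosh s = 2 * u / (1 + u ^ 2) := by
        rw [← Real.tanh_eq_sinh_div_cosh]; exact myTanh_double s
      rw [htd]
      have hden : (0:ℝ) < 1 + u ^ 2 := by positivity
      rw [sub_nonneg, div_le_iff₀ hden]
      nlinarith [mul_nonneg (mul_nonneg hu0 hu0) (mul_nonneg hu0 (sub_nonneg.2 hu1.le)),
        mul_nonneg (sub_nonneg.2 hus) (mul_nonneg (sub_nonneg.2 hu1.le) (by positivity : (0:ℝ) ≤ 1 + u^2))]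
  have h0 := hmono (Set.self_mem_Ici (a := (0:ℝ))) (Set.mem_Ici.2 ht) ht
  simp at h0
  linarith [h0]

lemma Lmean_symm (x y : ℝ) : Lmean x y = Lmean y x := by
  unfold Lmean
  by_cases h : x = y
  · subst h; simp
  · rw [if_neg h, if_neg (Ne.symm h)]
    rw [show y / x = (x / y)⁻¹ by rw [inv_div], Real.log_inv]
    rw [div_neg]
    ring

lemma Lmean_le_left {a b : ℝ} (hb : 0 < b) (hba : b ≤ a) : Lmean a b ≤ a := by
  have ha : 0 < a := lt_of_lt_of_le hb hba
  rcases eq_or_lt_of_le hba with h | h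
  · subst h; rw [Lmean, if_pos rfl]
  · rw [Lmean, if_neg (ne_of_gt h)]
    have hL : 0 < Real.log (a / b) := Real.log_pos ((one_lt_div hb).2 h)
    rw [div_le_iff₀ hL]
    have h1 : Real.log (b / a) ≤ b / a - 1 := Real.log_le_sub_one_of_pos (div_pos hb ha)
    have h2 : Real.log (a / b) = -Real.log (b / a) := by
      rw [show b / a = (a / b)⁻¹ by rw [inv_div], Real.log_inv, neg_neg]
    rw [h2]
    have h3 : b / a * a = b := div_mul_cancel₀ b (ne_of_gt ha)
    nlinarith

lemma step_aux {a b : ℝ} (hb : 0 < b) (hba : b ≤ a) :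
    Lmean a b ≤ Lmean ((a + b) / 2) (Real.sqrt (a * b)) := by
  have ha : 0 < a := lt_of_lt_of_le hb hba
  rcases eq_or_lt_of_le hba with h | h
  · subst h
    rw [show (b + b) / 2 = b by ring, Real.sqrt_mul_self hb.le]
  · -- b < a
    set t : ℝ := Real.log (a / b) / 2 with htdef
    have hab1 : (1:ℝ) < a / b := (one_lt_div hb).2 h
    have ht : 0 < t := by
      have := Real.log_pos hab1
      rw [htdef]; linarith
    set G : ℝ := Real.sqrt (a * b) with hGdef
    have hG : 0 < G := Real.sqrt_pos.2 (by positivity)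
    have hsa : 0 < Real.sqrt a := Real.sqrt_pos.2 ha
    have hsb : 0 < Real.sqrt b := Real.sqrt_pos.2 hb
    have hsa2 : Real.sqrt a * Real.sqrt a = a := Real.mul_self_sqrt ha.le
    have hsb2 : Real.sqrt b * Real.sqrt b = b := Real.mul_self_sqrt hb.le
    have hGm : G = Real.sqrt a * Real.sqrt b := Real.sqrt_mul ha.le b
    have hexp : Real.exp t = Real.sqrt a / Real.sqrt b := by
      rw [htdef, show Real.log (a / b) / 2 = Real.log (a / b) * (1/2) by ring]
      rw [← Real.rpow_def_of_pos (by positivity), ← Real.sqrt_eq_rpow]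
      exact Real.sqrt_div ha.le b
    have hexp' : Real.exp (-t) = Real.sqrt b / Real.sqrt a := by
      rw [Real.exp_neg, hexp, inv_div]
    have hcosh : Real.cosh t = (a + b) / 2 / G := by
      rw [Real.cosh_eq, hexp, hexp', hGm, ← hsa2, ← hsb2]
      field_simp
      ring_nf
      simp
    have hsinh : Real.sinh t = (a - b) / 2 / G := by
      rw [Real.sinh_eq, hexp, hexp', hGm, ← hsa2, ← hsb2]
      field_simp
      ring_nf
      simp
    have hcosh1 : 1 < Real.cosh t := Real.one_lt_cosh.2 (ne_of_gt ht)
    -- identities for RHS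
    have hAG : (a + b) / 2 = G * Real.cosh t := by
      rw [hcosh]; field_simp
    have hANe : (a + b) / 2 ≠ G := by
      rw [hAG]
      intro hcon
      have hc1 : Real.cosh t = 1 :=
        mul_left_cancel₀ (ne_of_gt hG) (hcon.trans (mul_one G).symm)
      linarith
    have hlogAG : Real.log ((a + b) / 2 / G) = Real.log (Real.cosh t) := by rw [hcosh]
    have hlogpos : 0 < Real.log (Real.cosh t) := Real.log_pos hcosh1
    -- Lmean values
    have hLab : Lmean a b = (a - b) / (2 * t) := by
      rw [Lmean, if_neg (ne_of_gt h), htdef]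
      field_simp
    have hLAG : Lmean ((a + b) / 2) (Real.sqrt (a * b)) =
        (G * (Real.cosh t - 1)) / Real.log (Real.cosh t) := by
      rw [Lmean, if_neg hANe, ← hGdef, hlogAG, hAG]
      ring_nf
    rw [hLab, hLAG]
    -- core comparison
    have hsinhpos : 0 < Real.sinh t := Real.sinh_pos_iff.2 ht
    have hab2 : a - b = 2 * G * Real.sinh t := by
      rw [hsinh]; field_simp
    have hkey := key_ineq ht.le
    have htanh : Real.tanh (t/2) * Real.sinh t = Real.cosh t - 1 := by
      have hC := Real.cosh_pos (t/2)
      have h1 := Real.cosh_sq_sub_sinh_sq (t/2)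
      rw [Real.tanh_eq_sinh_div_cosh, show t = 2 * (t/2) by ring,
        Real.sinh_two_mul, Real.cosh_two_mul]
      field_simp
      nlinarith
    have hcore : Real.sinh t * Real.log (Real.cosh t) ≤ t * (Real.cosh t - 1) := by
      calc Real.sinh t * Real.log (Real.cosh t)
          ≤ Real.sinh t * (t * Real.tanh (t/2)) := by
            exact mul_le_mul_of_nonneg_left hkey hsinhpos.le
        _ = t * (Real.tanh (t/2) * Real.sinh t) := by ring
        _ = t * (Real.cosh t - 1) := by rw [htanh]
    rw [div_le_div_iff₀ (by positivity) hlogpos, hab2]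
    calc 2 * G * Real.sinh t * Real.log (Real.cosh t)
        = 2 * G * (Real.sinh t * Real.log (Real.cosh t)) := by ring
      _ ≤ 2 * G * (t * (Real.cosh t - 1)) :=
          mul_le_mul_of_nonneg_left hcore (by positivity)
      _ = G * (Real.cosh t - 1) * (2 * t) := by ring

lemma Lmean_step {a b : ℝ} (ha : 0 < a) (hb : 0 < b) :
    Lmean a b ≤ Lmean ((a + b) / 2) (Real.sqrt (a * b)) := by
  rcases le_total b a with h | h
  · exact step_aux hb h
  · rw [Lmean_symm, add_comm, mul_comm]
    exact step_aux ha h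

theorem logMean_le_agm (x y : ℝ) (hx : 0 < x) (hy : 0 < y) :
    Lmean x y ≤ AG x y := by
  set a : ℕ → ℝ := fun n => (agmSeq x y n).1 with hadef
  set b : ℕ → ℝ := fun n => (agmSeq x y n).2 with hbdef
  have hrec1 : ∀ n, a (n+1) = (a n + b n) / 2 := fun n => rfl
  have hrec2 : ∀ n, b (n+1) = Real.sqrt (a n * b n) := fun n => rfl
  have hpos : ∀ n, 0 < a n ∧ 0 < b n := by
    intro n
    induction n with
    | zero => exact ⟨hx, hy⟩
    | succ n ih =>
      refine ⟨?_, ?_⟩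
      · rw [hrec1]; linarith [ih.1, ih.2]
      · rw [hrec2]; exact Real.sqrt_pos.2 (mul_pos ih.1 ih.2)
  have hba : ∀ n, b (n+1) ≤ a (n+1) := by
    intro n
    rw [hrec1, hrec2]
    have h1 : a n * b n ≤ ((a n + b n) / 2) ^ 2 := by nlinarith [sq_nonneg (a n - b n)]
    calc Real.sqrt (a n * b n) ≤ Real.sqrt (((a n + b n) / 2) ^ 2) := Real.sqrt_le_sqrt h1
      _ = (a n + b n) / 2 := Real.sqrt_sq (by linarith [(hpos n).1, (hpos n).2])
  have hbmono : ∀ n, b (n+1) ≤ b (n+2) := by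
    intro n
    rw [hrec2 (n+1)]
    have h1 : b (n+1) * b (n+1) ≤ a (n+1) * b (n+1) :=
      mul_le_mul_of_nonneg_right (hba n) (hpos (n+1)).2.le
    calc b (n+1) = Real.sqrt (b (n+1) * b (n+1)) := (Real.sqrt_mul_self (hpos (n+1)).2.le).symm
      _ ≤ Real.sqrt (a (n+1) * b (n+1)) := Real.sqrt_le_sqrt h1
  have haanti : ∀ n, a (n+2) ≤ a (n+1) := by
    intro n
    rw [hrec1 (n+1)]
    linarith [hba n]
  have hb1 : ∀ n, b 1 ≤ b (n+1) := by
    intro n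
    induction n with
    | zero => exact le_refl _
    | succ n ih => exact le_trans ih (hbmono n)
  set A : ℕ → ℝ := fun n => a (n+1) with hAdef
  have hAanti : Antitone A := antitone_nat_of_succ_le haanti
  have hAbdd : BddBelow (Set.range A) := by
    refine ⟨b 1, ?_⟩
    rintro z ⟨n, rfl⟩
    exact le_trans (hb1 n) (hba n)
  have hAtend : Filter.Tendsto A Filter.atTop (nhds (⨅ n, A n)) :=
    tendsto_atTop_ciInf hAanti hAbdd
  set l : ℝ := ⨅ n, A n with hldef
  have hatend : Filter.Tendsto a Filter.atTop (nhds l) := by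
    have : A = fun n => a (n + 1) := rfl
    rw [this] at hAtend
    exact (Filter.tendsto_add_atTop_iff_nat 1).1 hAtend
  have hAG : AG x y = l := hatend.limUnder_eq
  have hLmono : ∀ n, Lmean x y ≤ Lmean (a n) (b n) := by
    intro n
    induction n with
    | zero => exact le_refl _
    | succ n ih =>
      refine le_trans ih ?_
      rw [hrec1, hrec2]
      exact Lmean_step (hpos n).1 (hpos n).2
  have hub : ∀ n, Lmean x y ≤ A n := by
    intro n
    exact le_trans (hLmono (n+1)) (Lmean_le_left (hpos (n+1)).2 (hba n))
  rw [hAG]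
  exact ge_of_tendsto' hAtend hub
end

section
/- For r in (0,1), K(r) = π/(2·AG(1, √(1−r²))), where AG denotes the arithmetic-geometric mean. -/
open Real MeasureTheory Set Filter

noncomputable def ellI (a b : ℝ) : ℝ :=
  ∫ θ in Ioo (0:ℝ) (π/2), (Real.sqrt (a^2 * Real.cos θ^2 + b^2 * Real.sin θ^2))⁻¹

noncomputable def ellJ (a b : ℝ) : ℝ :=
  ∫ t in Ioi (0:ℝ), (Real.sqrt ((t^2+a^2)*(t^2+b^2)))⁻¹

lemma tan_image (b : ℝ) (hb : 0 < b) :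
    (fun θ => b * Real.tan θ) '' Ioo 0 (π/2) = Ioi 0 := by
  ext t
  constructor
  · rintro ⟨θ, ⟨h1, h2⟩, rfl⟩
    have hc : 0 < Real.cos θ := Real.cos_pos_of_mem_Ioo ⟨by linarith [pi_pos], h2⟩
    have hs : 0 < Real.sin θ := Real.sin_pos_of_pos_of_lt_pi h1 (by linarith [pi_pos])
    have : 0 < Real.tan θ := by rw [Real.tan_eq_sin_div_cos]; positivity
    exact mul_pos hb this
  · intro ht
    have ht : (0:ℝ) < t := ht
    refine ⟨Real.arctan (t / b), ⟨?_, Real.arctan_lt_pi_div_two _⟩, ?_⟩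
    · rw [← Real.arctan_zero]; exact Real.arctan_strictMono (by positivity)
    · show b * Real.tan (Real.arctan (t/b)) = t
      rw [Real.tan_arctan]; field_simp

lemma ellI_eq_ellJ {a b : ℝ} (ha : 0 < a) (hb : 0 < b) : ellI a b = ellJ a b := by
  have hinj : InjOn (fun θ => b * Real.tan θ) (Ioo 0 (π/2)) := by
    have : StrictMonoOn (fun θ => b * Real.tan θ) (Ioo (-(π/2)) (π/2)) := by
      intro x hx y hy hxy
      exact mul_lt_mul_of_pos_left (Real.strictMonoOn_tan hx hy hxy) hb
    refine (this.injOn).mono (fun x hx => ?_)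
    exact ⟨by linarith [pi_pos, hx.1], hx.2⟩
  have hderiv : ∀ θ ∈ Ioo (0:ℝ) (π/2), HasDerivWithinAt (fun θ => b * Real.tan θ)
      (b / Real.cos θ ^ 2) (Ioo 0 (π/2)) θ := by
    intro θ ⟨h1, h2⟩
    have hc : 0 < Real.cos θ := Real.cos_pos_of_mem_Ioo ⟨by linarith [pi_pos], h2⟩
    have := (Real.hasDerivAt_tan hc.ne').const_mul b
    simpa [mul_one_div, div_eq_mul_inv] using this.hasDerivWithinAt
  rw [ellJ, ← tan_image b hb,
    integral_image_eq_integral_abs_deriv_smul measurableSet_Ioo hderiv hinj]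
  refine setIntegral_congr_fun measurableSet_Ioo (fun θ ⟨h1, h2⟩ => ?_)
  have hc : 0 < Real.cos θ := Real.cos_pos_of_mem_Ioo ⟨by linarith [pi_pos], h2⟩
  have key : ((b * Real.tan θ)^2 + a^2) * ((b * Real.tan θ)^2 + b^2)
      = (a^2 * Real.cos θ^2 + b^2 * Real.sin θ^2) * b^2 / Real.cos θ^4 := by
    rw [Real.tan_eq_sin_div_cos]
    field_simp
    linear_combination (b^2*Real.sin θ^2 + Real.cos θ^2*a^2) * (Real.sin_sq_add_cos_sq θ)
  have hpos : 0 < a^2 * Real.cos θ^2 + b^2 * Real.sin θ^2 := by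
    have := Real.sin_pos_of_pos_of_lt_pi h1 (by linarith [pi_pos])
    positivity
  rw [key, smul_eq_mul]
  rw [show (a^2 * Real.cos θ^2 + b^2 * Real.sin θ^2) * b^2 / Real.cos θ^4
      = (a^2 * Real.cos θ^2 + b^2 * Real.sin θ^2) * (b / Real.cos θ^2)^2 by
    field_simp]
  rw [Real.sqrt_mul hpos.le, Real.sqrt_sq (by positivity)]
  rw [abs_of_pos (by positivity)]
  rw [mul_inv]
  field_simp


lemma gauss_image {c : ℝ} (hc : 0 < c) :
    (fun t => (t - c/t)/2) '' Ioi 0 = univ := by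
  apply eq_univ_of_forall
  intro y
  set s := Real.sqrt (y^2 + c) with hs
  have hs2 : s^2 = y^2 + c := Real.sq_sqrt (by positivity)
  have habs : |y| < s := by
    rw [hs, ← Real.sqrt_sq_eq_abs]
    exact Real.sqrt_lt_sqrt (by positivity) (by linarith)
  have ht : 0 < y + s := by
    have := neg_abs_le y
    linarith
  refine ⟨y + s, ht, ?_⟩
  show (y + s - c/(y+s))/2 = y
  field_simp
  linear_combination hs2

lemma gauss_injOn {c : ℝ} (hc : 0 < c) :
    InjOn (fun t => (t - c/t)/2) (Ioi 0) := by
  have : StrictMonoOn (fun t => (t - c/t)/2) (Ioi 0) := by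
    intro x hx y hy hxy
    have h1 : c / y < c / x := div_lt_div_of_pos_left hc hx hxy
    simp only
    linarith
  exact this.injOn

lemma ellJ_landen {a b : ℝ} (ha : 0 < a) (hb : 0 < b) :
    ellJ ((a+b)/2) (Real.sqrt (a*b)) = ellJ a b := by
  set c := a * b with hcdef
  have hc : 0 < c := mul_pos ha hb
  set G : ℝ → ℝ := fun u =>
    (Real.sqrt ((u^2+((a+b)/2)^2)*(u^2+(Real.sqrt (a*b))^2)))⁻¹ with hG
  have hGeven : ∀ u : ℝ, G |u| = G u := by
    intro u; simp only [hG, sq_abs]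
  have hderiv : ∀ t ∈ Ioi (0:ℝ), HasDerivWithinAt (fun t => (t - c/t)/2)
      ((1 + c/t^2)/2) (Ioi 0) t := by
    intro t ht
    have ht : (0:ℝ) < t := ht
    have h1 : HasDerivAt (fun t : ℝ => (t - c * t⁻¹)/2)
        ((1 - c * (-(t^2)⁻¹))/2) t :=
      ((hasDerivAt_id t).sub ((hasDerivAt_inv ht.ne').const_mul c)).div_const 2
    have h2 : (1 - c * (-(t^2)⁻¹))/2 = (1 + c/t^2)/2 := by field_simp; ring
    rw [h2] at h1
    exact (h1.congr_of_eventuallyEq (by filter_upwards [] with x; rw [div_eq_mul_inv c])).hasDerivWithinAt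
  have step1 : ∫ u, G |u| = 2 * ∫ u in Ioi (0:ℝ), G u := integral_comp_abs
  have step2 : (∫ u, G |u|) = ∫ u in univ, G u := by
    rw [setIntegral_univ]; exact integral_congr_ae (Eventually.of_forall hGeven)
  have step3 : (∫ u in univ, G u) = ∫ t in Ioi (0:ℝ), |(1 + c/t^2)/2| • G ((t - c/t)/2) := by
    rw [← gauss_image hc]
    exact integral_image_eq_integral_abs_deriv_smul measurableSet_Ioi hderiv (gauss_injOn hc) G
  have step4 : (∫ t in Ioi (0:ℝ), |(1 + c/t^2)/2| • G ((t - c/t)/2))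
      = ∫ t in Ioi (0:ℝ), 2 * (Real.sqrt ((t^2+a^2)*(t^2+b^2)))⁻¹ := by
    refine setIntegral_congr_fun measurableSet_Ioi (fun t ht => ?_)
    have ht : (0:ℝ) < t := ht
    have hsq : (Real.sqrt (a*b))^2 = a*b := Real.sq_sqrt (by positivity)
    have key : (((t - c/t)/2)^2+((a+b)/2)^2)*(((t - c/t)/2)^2+(Real.sqrt (a*b))^2)
        = ((t^2+a^2)*(t^2+b^2)) * ((t^2+c)/(4*t^2))^2 := by
      rw [hsq, hcdef]
      field_simp
      ring
    have hx : (0:ℝ) < (t^2+a^2)*(t^2+b^2) := by positivity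
    rw [hG]
    simp only
    rw [key, Real.sqrt_mul hx.le, Real.sqrt_sq (by positivity),
      abs_of_pos (by positivity), smul_eq_mul]
    have hrw : (1 + c/t^2)/2 = (t^2+c)/(2*t^2) := by
      field_simp
    rw [hrw]
    have hs1 : Real.sqrt ((t^2+a^2)*(t^2+b^2)) ≠ 0 := (Real.sqrt_pos.mpr hx).ne'
    have h2 : (0:ℝ) < t^2 + c := by positivity
    field_simp
    ring
  have step5 : (∫ t in Ioi (0:ℝ), 2 * (Real.sqrt ((t^2+a^2)*(t^2+b^2)))⁻¹) = 2 * ellJ a b :=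
    integral_const_mul 2 _
  have : 2 * ellJ ((a+b)/2) (Real.sqrt (a*b)) = 2 * ellJ a b := by
    rw [ellJ, ← step1, step2, step3, step4, step5]
  linarith


lemma ellI_integrable {a b : ℝ} (ha : 0 < a) (hb : 0 < b) (hba : b ≤ a) :
    IntegrableOn (fun θ => (Real.sqrt (a^2 * Real.cos θ^2 + b^2 * Real.sin θ^2))⁻¹)
      (Ioo (0:ℝ) (π/2)) := by
  have hcont : Continuous (fun θ : ℝ => (Real.sqrt (a^2 * Real.cos θ^2 + b^2 * Real.sin θ^2))⁻¹) := by
    apply Continuous.inv₀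
    · exact (Real.continuous_sqrt.comp (by continuity))
    · intro θ
      have hab2 : b^2 ≤ a^2 := by nlinarith
      have h1 : b^2 ≤ a^2 * Real.cos θ^2 + b^2 * Real.sin θ^2 := by
        nlinarith [mul_nonneg (sub_nonneg.mpr hab2) (sq_nonneg (Real.cos θ)), Real.sin_sq_add_cos_sq θ]
      exact (Real.sqrt_pos.mpr (lt_of_lt_of_le (by positivity) h1)).ne'
  rw [← intervalIntegrable_iff_integrableOn_Ioo_of_le (by positivity : (0:ℝ) ≤ π/2)]
  exact hcont.intervalIntegrable 0 (π/2)

lemma ellI_bounds {a b : ℝ} (ha : 0 < a) (hb : 0 < b) (hba : b ≤ a) :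
    π/(2*a) ≤ ellI a b ∧ ellI a b ≤ π/(2*b) := by
  have hmes : MeasurableSet (Ioo (0:ℝ) (π/2)) := measurableSet_Ioo
  have hint := ellI_integrable ha hb hba
  have hvol : (volume (Ioo (0:ℝ) (π/2))).toReal = π/2 := by
    rw [Real.volume_Ioo, sub_zero, ENNReal.toReal_ofReal (by positivity)]
  have hbd : ∀ θ ∈ Ioo (0:ℝ) (π/2),
      (1:ℝ)/a ≤ (Real.sqrt (a^2 * Real.cos θ^2 + b^2 * Real.sin θ^2))⁻¹ ∧
      (Real.sqrt (a^2 * Real.cos θ^2 + b^2 * Real.sin θ^2))⁻¹ ≤ 1/b := by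
    intro θ _
    have hsc := Real.sin_sq_add_cos_sq θ
    have hab2 : b^2 ≤ a^2 := by nlinarith
    have h1 : b^2 ≤ a^2 * Real.cos θ^2 + b^2 * Real.sin θ^2 := by
      nlinarith [mul_nonneg (sub_nonneg.mpr hab2) (sq_nonneg (Real.cos θ))]
    have h2 : a^2 * Real.cos θ^2 + b^2 * Real.sin θ^2 ≤ a^2 := by
      nlinarith [mul_nonneg (sub_nonneg.mpr hab2) (sq_nonneg (Real.sin θ))]
    have hs1 : b ≤ Real.sqrt (a^2 * Real.cos θ^2 + b^2 * Real.sin θ^2) := by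
      calc b = Real.sqrt (b^2) := (Real.sqrt_sq hb.le).symm
        _ ≤ _ := Real.sqrt_le_sqrt h1
    have hs2 : Real.sqrt (a^2 * Real.cos θ^2 + b^2 * Real.sin θ^2) ≤ a := by
      calc _ ≤ Real.sqrt (a^2) := Real.sqrt_le_sqrt h2
        _ = a := Real.sqrt_sq ha.le
    constructor
    · rw [one_div]
      exact inv_anti₀ (by linarith) hs2
    · rw [one_div]
      exact inv_anti₀ hb hs1
  constructor
  · have : (∫ _ in Ioo (0:ℝ) (π/2), (1:ℝ)/a) ≤ ellI a b := by
      apply setIntegral_mono_on (by simp [integrableOn_const]) hint hmes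
      exact fun θ hθ => (hbd θ hθ).1
    rw [setIntegral_const, measureReal_def, hvol, smul_eq_mul] at this
    calc π/(2*a) = π/2 * (1/a) := by ring
      _ ≤ ellI a b := this
  · have : ellI a b ≤ ∫ _ in Ioo (0:ℝ) (π/2), (1:ℝ)/b := by
      apply setIntegral_mono_on hint (by simp [integrableOn_const]) hmes
      exact fun θ hθ => (hbd θ hθ).2
    rw [setIntegral_const, measureReal_def, hvol, smul_eq_mul] at this
    calc ellI a b ≤ π/2 * (1/b) := this
      _ = π/(2*b) := by ring


variable {x y : ℝ}

lemma agm_basic (hy : 0 < y) (hxy : y ≤ x) :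
    ∀ n, 0 < (agmSeq x y n).2 ∧ (agmSeq x y n).2 ≤ (agmSeq x y n).1 := by
  intro n
  induction n with
  | zero => exact ⟨hy, hxy⟩
  | succ n ih =>
    obtain ⟨h1, h2⟩ := ih
    set a := (agmSeq x y n).1
    set b := (agmSeq x y n).2
    have ha : 0 < a := lt_of_lt_of_le h1 h2
    constructor
    · show 0 < Real.sqrt (a * b)
      exact Real.sqrt_pos.mpr (by positivity)
    · show Real.sqrt (a * b) ≤ (a + b)/2
      calc Real.sqrt (a * b) ≤ Real.sqrt (((a+b)/2)^2) := Real.sqrt_le_sqrt (by nlinarith [sq_nonneg (a-b)])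
        _ = (a+b)/2 := Real.sqrt_sq (by positivity)

lemma agm_anti (hy : 0 < y) (hxy : y ≤ x) :
    ∀ n, (agmSeq x y (n+1)).1 ≤ (agmSeq x y n).1 := by
  intro n
  obtain ⟨h1, h2⟩ := agm_basic hy hxy n
  show ((agmSeq x y n).1 + (agmSeq x y n).2)/2 ≤ (agmSeq x y n).1
  linarith

lemma agm_b_mono (hy : 0 < y) (hxy : y ≤ x) :
    ∀ n, (agmSeq x y n).2 ≤ (agmSeq x y (n+1)).2 := by
  intro n
  obtain ⟨h1, h2⟩ := agm_basic hy hxy n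
  show (agmSeq x y n).2 ≤ Real.sqrt ((agmSeq x y n).1 * (agmSeq x y n).2)
  calc (agmSeq x y n).2 = Real.sqrt ((agmSeq x y n).2^2) := (Real.sqrt_sq h1.le).symm
    _ ≤ _ := Real.sqrt_le_sqrt (by nlinarith)

lemma agm_y_le (hy : 0 < y) (hxy : y ≤ x) : ∀ n, y ≤ (agmSeq x y n).2 := by
  intro n
  induction n with
  | zero => exact le_refl _
  | succ n ih => exact le_trans ih (agm_b_mono hy hxy n)

lemma agm_diff (hy : 0 < y) (hxy : y ≤ x) :
    ∀ n, (agmSeq x y n).1 - (agmSeq x y n).2 ≤ (x - y) * (1/2)^n := by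
  intro n
  induction n with
  | zero => simp [agmSeq]
  | succ n ih =>
    obtain ⟨h1, h2⟩ := agm_basic hy hxy n
    have hb := agm_b_mono hy hxy n
    have : (agmSeq x y (n+1)).1 = ((agmSeq x y n).1 + (agmSeq x y n).2)/2 := rfl
    rw [this]
    have : (x - y) * (1/2)^(n+1) = ((x-y) * (1/2)^n)/2 := by ring
    rw [this]
    linarith

lemma agm_converges (hy : 0 < y) (hxy : y ≤ x) :
    ∃ M : ℝ, 0 < M ∧ y ≤ M ∧
      Tendsto (fun n => (agmSeq x y n).1) atTop (nhds M) ∧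
      Tendsto (fun n => (agmSeq x y n).2) atTop (nhds M) := by
  have hanti : Antitone (fun n => (agmSeq x y n).1) :=
    antitone_nat_of_succ_le (agm_anti hy hxy)
  have hbdd : BddBelow (range (fun n => (agmSeq x y n).1)) := by
    refine ⟨y, ?_⟩
    rintro _ ⟨n, rfl⟩
    exact le_trans (agm_y_le hy hxy n) (agm_basic hy hxy n).2
  set M := ⨅ n, (agmSeq x y n).1 with hM
  have hA : Tendsto (fun n => (agmSeq x y n).1) atTop (nhds M) :=
    tendsto_atTop_ciInf hanti hbdd
  have hyM : y ≤ M := le_ciInf (fun n => le_trans (agm_y_le hy hxy n) (agm_basic hy hxy n).2)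
  have hdiff : Tendsto (fun n => (agmSeq x y n).1 - (agmSeq x y n).2) atTop (nhds 0) := by
    apply squeeze_zero (fun n => by linarith [(agm_basic hy hxy n).2])
      (agm_diff hy hxy)
    have := (tendsto_pow_atTop_nhds_zero_of_lt_one (by norm_num : (0:ℝ) ≤ 1/2) (by norm_num)).const_mul (x - y)
    simpa using this
  have hB : Tendsto (fun n => (agmSeq x y n).2) atTop (nhds M) := by
    have := hA.sub hdiff
    simpa using this
  exact ⟨M, lt_of_lt_of_le hy hyM, hyM, hA, hB⟩


lemma ellI_invariant {x y : ℝ} (hy : 0 < y) (hxy : y ≤ x) :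
    ∀ n, ellI (agmSeq x y n).1 (agmSeq x y n).2 = ellI x y := by
  intro n
  induction n with
  | zero => rfl
  | succ n ih =>
    obtain ⟨hb, hba⟩ := agm_basic hy hxy n
    set a := (agmSeq x y n).1
    set b := (agmSeq x y n).2
    have ha : 0 < a := lt_of_lt_of_le hb hba
    have h1 : (agmSeq x y (n+1)).1 = (a + b)/2 := rfl
    have h2 : (agmSeq x y (n+1)).2 = Real.sqrt (a * b) := rfl
    rw [h1, h2, ← ih]
    rw [ellI_eq_ellJ (by positivity) (Real.sqrt_pos.mpr (by positivity)),
      ellJ_landen ha hb, ← ellI_eq_ellJ ha hb]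

theorem ellK_eq_agm (r : ℝ) (hr : r ∈ Set.Ioo (0:ℝ) 1) :
    ellK r = Real.pi / (2 * AG 1 (Real.sqrt (1 - r^2))) := by
  obtain ⟨hr0, hr1⟩ := hr
  set b := Real.sqrt (1 - r^2) with hbdef
  have h1r : (0:ℝ) < 1 - r^2 := by nlinarith
  have hb2 : b^2 = 1 - r^2 := Real.sq_sqrt h1r.le
  have hb0 : 0 < b := Real.sqrt_pos.mpr h1r
  have hb1 : b ≤ 1 := by
    calc b = Real.sqrt (1 - r^2) := hbdef
      _ ≤ Real.sqrt 1 := Real.sqrt_le_sqrt (by nlinarith)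
      _ = 1 := Real.sqrt_one
  have hK : ellK r = ellI 1 b := by
    rw [ellK, intervalIntegral.integral_of_le (by positivity), integral_Ioc_eq_integral_Ioo]
    refine setIntegral_congr_fun measurableSet_Ioo (fun θ _ => ?_)
    rw [one_div]
    congr 2
    rw [hb2]
    linear_combination -Real.sin_sq_add_cos_sq θ
  obtain ⟨M, hM0, hyM, hA, hB⟩ := agm_converges hb0 hb1
  have hAG : AG 1 b = M := by
    rw [AG]
    exact hA.limUnder_eq
  have hinv := ellI_invariant hb0 hb1
  have hbnd : ∀ n : ℕ, π/(2*(agmSeq 1 b n).1) ≤ ellI 1 b ∧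
      ellI 1 b ≤ π/(2*(agmSeq 1 b n).2) := by
    intro n
    obtain ⟨hbn, hban⟩ := agm_basic hb0 hb1 n
    have han : 0 < (agmSeq 1 b n).1 := lt_of_lt_of_le hbn hban
    have := ellI_bounds han hbn hban
    rw [hinv n] at this
    exact this
  have htendA : Tendsto (fun n => π/(2*(agmSeq 1 b n).1)) atTop (nhds (π/(2*M))) :=
    tendsto_const_nhds.div ((tendsto_const_nhds.mul hA)) (by positivity)
  have htendB : Tendsto (fun n => π/(2*(agmSeq 1 b n).2)) atTop (nhds (π/(2*M))) :=
    tendsto_const_nhds.div ((tendsto_const_nhds.mul hB)) (by positivity)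
  have hle : π/(2*M) ≤ ellI 1 b :=
    le_of_tendsto htendA (Eventually.of_forall (fun n => (hbnd n).1))
  have hge : ellI 1 b ≤ π/(2*M) :=
    ge_of_tendsto htendB (Eventually.of_forall (fun n => (hbnd n).2))
  rw [hK, hAG]
  linarith
end

section
/- For all r in [0,1] and K > 0, φ_K(r)² + φ_{1/K}(√(1−r²))² = 1. -/
noncomputable def mu (r : ℝ) : ℝ :=
  (Real.pi/2) * ellK (Real.sqrt (1 - r^2)) / ellK r

noncomputable def muInv (y : ℝ) : ℝ := Function.invFunOn mu (Set.Ioo 0 1) y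

noncomputable def phi (K r : ℝ) : ℝ :=
  if r = 0 then 0 else if r = 1 then 1 else muInv (mu r / K)

open Real Set Filter

lemma denom_pos {r θ : ℝ} (hr : r^2 < 1) : 0 < 1 - r^2 * Real.sin θ ^ 2 := by
  nlinarith [Real.sin_sq_le_one θ, sq_nonneg r, sq_nonneg (Real.sin θ)]

lemma cont_integrand {r : ℝ} (hr : r^2 < 1) :
    Continuous fun θ : ℝ => 1 / Real.sqrt (1 - r^2 * Real.sin θ ^ 2) := by
  refine Continuous.div continuous_const (Real.continuous_sqrt.comp (by fun_prop)) ?_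
  intro θ
  exact (Real.sqrt_pos.mpr (denom_pos hr)).ne'

lemma le_ellK {r : ℝ} (hr : r^2 < 1) : Real.pi/2 ≤ ellK r := by
  have h : (Real.pi/2 : ℝ) = ∫ _θ in (0:ℝ)..(Real.pi/2), (1:ℝ) := by simp
  rw [h, ellK]
  apply intervalIntegral.integral_mono_on (by positivity) intervalIntegrable_const
    ((cont_integrand hr).intervalIntegrable _ _)
  intro θ _
  rw [le_div_iff₀ (Real.sqrt_pos.mpr (denom_pos hr)), one_mul]
  exact Real.sqrt_le_one.mpr (by nlinarith [sq_nonneg r, sq_nonneg (Real.sin θ)])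

lemma ellK_pos {r : ℝ} (hr : r^2 < 1) : 0 < ellK r :=
  lt_of_lt_of_le (by positivity) (le_ellK hr)

lemma ellK_lt_ellK {a b : ℝ} (ha : 0 ≤ a) (hab : a < b) (hb : b < 1) : ellK a < ellK b := by
  have ha2 : a^2 < 1 := by nlinarith
  have hb2 : b^2 < 1 := by nlinarith
  apply intervalIntegral.integral_lt_integral_of_continuousOn_of_le_of_exists_lt
    (by positivity) (cont_integrand ha2).continuousOn (cont_integrand hb2).continuousOn
  · intro θ _
    apply one_div_le_one_div_of_le (Real.sqrt_pos.mpr (denom_pos hb2))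
    apply Real.sqrt_le_sqrt
    have h1 : a^2 ≤ b^2 := by nlinarith
    have := mul_le_mul_of_nonneg_right h1 (sq_nonneg (Real.sin θ))
    linarith
  · refine ⟨Real.pi/4, ⟨by positivity, by linarith [Real.pi_pos]⟩, ?_⟩
    apply one_div_lt_one_div_of_lt (Real.sqrt_pos.mpr (denom_pos hb2))
    apply Real.sqrt_lt_sqrt (denom_pos hb2).le
    have hs : 0 < Real.sin (Real.pi/4) := by
      rw [Real.sin_pi_div_four]; positivity
    have h1 : a^2 < b^2 := by nlinarith
    have := mul_lt_mul_of_pos_right h1 (pow_pos hs 2)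
    linarith

lemma ellK_continuousAt {r : ℝ} (hr : r^2 < 1) : ContinuousAt ellK r := by
  set b : ℝ := (r^2 + 1)/2 with hbdef
  have hb1 : r^2 < b := by simp only [hbdef]; linarith
  have hb2 : b < 1 := by simp only [hbdef]; linarith
  have hb0 : 0 ≤ b := le_trans (sq_nonneg r) hb1.le
  have hcont : Continuous fun x : ℝ =>
      ∫ θ in (0:ℝ)..(Real.pi/2), 1 / Real.sqrt (1 - min (x^2) b * Real.sin θ ^ 2) := by
    apply intervalIntegral.continuous_parametric_intervalIntegral_of_continuous'
    have : Continuous fun p : ℝ × ℝ => 1 / Real.sqrt (1 - min (p.1^2) b * Real.sin p.2 ^ 2) := by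
      refine Continuous.div continuous_const (Real.continuous_sqrt.comp (by fun_prop)) ?_
      intro p
      refine (Real.sqrt_pos.mpr ?_).ne'
      have h1 : min (p.1^2) b ≤ b := min_le_right _ _
      have h2 : 0 ≤ min (p.1^2) b := le_min (sq_nonneg _) hb0
      nlinarith [Real.sin_sq_le_one p.2]
    exact this
  apply hcont.continuousAt.congr
  have hopen : IsOpen {x : ℝ | x^2 < b} := isOpen_lt (by fun_prop) continuous_const
  filter_upwards [hopen.mem_nhds hb1] with x hx
  simp only [ellK, min_eq_left (le_of_lt hx)]

lemma sqrt_aux {a u : ℝ} (ha : 0 < a) :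
    HasDerivAt (fun θ : ℝ => -Real.arsinh ((Real.pi/2 - θ)/a)) (1 / Real.sqrt (a^2 + (Real.pi/2 - u)^2)) u := by
  have h1 : HasDerivAt (fun θ : ℝ => (Real.pi/2 - θ)/a) (-1/a) u := by
    simpa using ((hasDerivAt_id u).const_sub (Real.pi/2)).div_const a
  have h2 := (Real.hasDerivAt_arsinh ((Real.pi/2 - u)/a)).comp u h1
  have h3 := h2.neg
  refine h3.congr_deriv (Eq.symm ?_)
  have key : Real.sqrt (a^2 + (Real.pi/2 - u)^2) = a * Real.sqrt (1 + ((Real.pi/2 - u)/a)^2) := by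
    rw [← Real.sqrt_sq ha.le, ← Real.sqrt_mul (sq_nonneg a)]
    congr 1
    field_simp
    rw [Real.sq_sqrt (sq_nonneg a)]
  have hs : (0:ℝ) < Real.sqrt (1 + ((Real.pi/2 - u)/a)^2) := Real.sqrt_pos.mpr (by positivity)
  rw [key]
  rw [div_eq_iff (by positivity)]
  field_simp

lemma integral_aux {a : ℝ} (ha : 0 < a) :
    ∫ θ in (0:ℝ)..(Real.pi/2), 1 / Real.sqrt (a^2 + (Real.pi/2 - θ)^2)
      = Real.arsinh (Real.pi/2 / a) := by
  have hcont : Continuous fun θ : ℝ => 1 / Real.sqrt (a^2 + (Real.pi/2 - θ)^2) := by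
    refine Continuous.div continuous_const (Real.continuous_sqrt.comp (by fun_prop)) ?_
    intro θ
    refine (Real.sqrt_pos.mpr ?_).ne'
    positivity
  have := intervalIntegral.integral_eq_sub_of_hasDerivAt (a := (0:ℝ)) (b := Real.pi/2)
    (f := fun θ : ℝ => -Real.arsinh ((Real.pi/2 - θ)/a))
    (f' := fun u : ℝ => 1 / Real.sqrt (a^2 + (Real.pi/2 - u)^2))
    (fun u _ => sqrt_aux ha) (hcont.intervalIntegrable _ _)
  rw [this]
  simp [Real.arsinh_zero]

lemma arsinh_le_ellK {r : ℝ} (h0 : 0 ≤ r) (h1 : r < 1) :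
    Real.arsinh (Real.pi/2 / Real.sqrt (1 - r^2)) ≤ ellK r := by
  have hr2 : r^2 < 1 := by nlinarith
  set a : ℝ := Real.sqrt (1 - r^2) with hadef
  have ha : 0 < a := Real.sqrt_pos.mpr (by nlinarith)
  have ha2 : a^2 = 1 - r^2 := Real.sq_sqrt (by nlinarith)
  rw [← integral_aux ha]
  have hcont : Continuous fun θ : ℝ => 1 / Real.sqrt (a^2 + (Real.pi/2 - θ)^2) := by
    refine Continuous.div continuous_const (Real.continuous_sqrt.comp (by fun_prop)) ?_
    intro θ
    refine (Real.sqrt_pos.mpr ?_).ne'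
    positivity
  apply intervalIntegral.integral_mono_on (by positivity)
    (hcont.intervalIntegrable _ _) ((cont_integrand hr2).intervalIntegrable _ _)
  intro θ hθ
  apply one_div_le_one_div_of_le (Real.sqrt_pos.mpr (denom_pos hr2))
  apply Real.sqrt_le_sqrt
  -- 1 - r² sin²θ = a² + r² cos²θ ≤ a² + (π/2 - θ)²
  have hcos : Real.cos θ ≤ Real.pi/2 - θ := by
    have := Real.sin_le (x := Real.pi/2 - θ) (by linarith [hθ.2])
    rwa [Real.sin_pi_div_two_sub] at this
  have hcos0 : 0 ≤ Real.cos θ := Real.cos_nonneg_of_mem_Icc ⟨by linarith [hθ.1, Real.pi_pos], hθ.2⟩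
  have hcos2 : Real.cos θ ^ 2 ≤ (Real.pi/2 - θ)^2 := by nlinarith
  have hpyth := Real.sin_sq_add_cos_sq θ
  nlinarith [sq_nonneg r, sq_nonneg (Real.cos θ)]

lemma arsinh_tendsto : Tendsto Real.arsinh atTop atTop :=
  tendsto_atTop_atTop_of_monotone Real.arsinh_strictMono.monotone
    (fun b => ⟨Real.sinh b, (Real.arsinh_sinh b).ge⟩)

lemma sq_lt_one_of_Ioo {r : ℝ} (h : r ∈ Ioo (0:ℝ) 1) : r^2 < 1 := by nlinarith [h.1, h.2]

lemma sqrt_mem_Ioo {r : ℝ} (h : r ∈ Ioo (0:ℝ) 1) : Real.sqrt (1 - r^2) ∈ Ioo (0:ℝ) 1 := by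
  constructor
  · exact Real.sqrt_pos.mpr (by nlinarith [h.1, h.2])
  · rw [show Real.sqrt (1 - r^2) < 1 ↔ 1 - r^2 < 1^2 from Real.sqrt_lt' one_pos]
    nlinarith [h.1, h.2]

lemma sqrt_sqrt_self {r : ℝ} (h0 : 0 ≤ r) (h1 : r ≤ 1) :
    Real.sqrt (1 - Real.sqrt (1 - r^2)^2) = r := by
  rw [Real.sq_sqrt (by nlinarith)]
  simp [Real.sqrt_sq h0]

lemma mu_pos {r : ℝ} (h : r ∈ Ioo (0:ℝ) 1) : 0 < mu r := by
  have h1 := ellK_pos (sq_lt_one_of_Ioo h)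
  have h2 := ellK_pos (sq_lt_one_of_Ioo (sqrt_mem_Ioo h))
  rw [mu]
  positivity

lemma mu_mul {r : ℝ} (h : r ∈ Ioo (0:ℝ) 1) :
    mu r * mu (Real.sqrt (1 - r^2)) = (Real.pi/2)^2 := by
  have h1 := ellK_pos (sq_lt_one_of_Ioo h)
  have h2 := ellK_pos (sq_lt_one_of_Ioo (sqrt_mem_Ioo h))
  rw [mu, mu, sqrt_sqrt_self h.1.le h.2.le]
  field_simp

lemma mu_strictAnti : StrictAntiOn mu (Ioo (0:ℝ) 1) := by
  intro a ha b hb hab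
  have ha1 := ellK_pos (sq_lt_one_of_Ioo ha)
  have hb1 := ellK_pos (sq_lt_one_of_Ioo hb)
  have ha' := sqrt_mem_Ioo ha
  have hb' := sqrt_mem_Ioo hb
  have hnum : ellK (Real.sqrt (1 - b^2)) < ellK (Real.sqrt (1 - a^2)) := by
    apply ellK_lt_ellK hb'.1.le _ ha'.2
    apply Real.sqrt_lt_sqrt (by nlinarith [hb.1, hb.2])
    nlinarith [ha.1, hb.1]
  have hden : ellK a < ellK b := ellK_lt_ellK ha.1.le hab hb.2
  rw [mu, mu]
  have h2 := ellK_pos (sq_lt_one_of_Ioo hb')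
  have h3 := ellK_pos (sq_lt_one_of_Ioo ha')
  rw [div_lt_div_iff₀ hb1 ha1]
  have hpi := Real.pi_pos
  nlinarith [mul_lt_mul_of_pos_left hnum (show (0:ℝ) < Real.pi/2 by positivity),
    mul_lt_mul_of_pos_left hden (show (0:ℝ) < (Real.pi/2) * ellK (Real.sqrt (1 - b^2)) by positivity)]

lemma mu_continuousAt {r : ℝ} (h : r ∈ Ioo (0:ℝ) 1) : ContinuousAt mu r := by
  have h1 := ellK_pos (sq_lt_one_of_Ioo h)
  have hc1 : ContinuousAt ellK r := ellK_continuousAt (sq_lt_one_of_Ioo h)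
  have hc2 : ContinuousAt (fun x : ℝ => ellK (Real.sqrt (1 - x^2))) r :=
    ContinuousAt.comp (x := r) (g := ellK) (f := fun x : ℝ => Real.sqrt (1 - x^2))
      (ellK_continuousAt (sq_lt_one_of_Ioo (sqrt_mem_Ioo h))) (by fun_prop)
  exact (ContinuousAt.mul continuousAt_const hc2).div hc1 h1.ne'

lemma sqrt_one_sub_sq_tendsto : Tendsto (fun r : ℝ => Real.sqrt (1 - r^2))
    (nhdsWithin 1 (Iio (1:ℝ))) (nhdsWithin 0 (Ioi (0:ℝ))) := by
  rw [tendsto_nhdsWithin_iff]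
  constructor
  · have hc : Continuous (fun r : ℝ => Real.sqrt (1 - r^2)) := by fun_prop
    have h10 : Real.sqrt (1 - (1:ℝ)^2) = 0 := by norm_num
    have := hc.tendsto 1
    rw [h10] at this
    exact this.mono_left nhdsWithin_le_nhds
  · filter_upwards [Ioo_mem_nhdsLT_of_mem (show (1:ℝ) ∈ Ioc (0:ℝ) 1 by constructor <;> norm_num)]
      with r hr
    exact (sqrt_mem_Ioo hr).1

lemma ellK_tendsto_atTop : Tendsto ellK (nhdsWithin 1 (Iio (1:ℝ))) atTop := by
  have hg : Tendsto (fun r : ℝ => Real.arsinh (Real.pi/2 / Real.sqrt (1 - r^2)))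
      (nhdsWithin 1 (Iio (1:ℝ))) atTop := by
    apply arsinh_tendsto.comp
    have hinv : Tendsto (fun x : ℝ => Real.pi/2 / x) (nhdsWithin 0 (Ioi (0:ℝ))) atTop := by
      simp only [div_eq_mul_inv]
      exact tendsto_inv_nhdsGT_zero.const_mul_atTop (by positivity)
    exact hinv.comp sqrt_one_sub_sq_tendsto
  apply tendsto_atTop_mono' _ _ hg
  filter_upwards [Ioo_mem_nhdsLT_of_mem (show (1:ℝ) ∈ Ioc (0:ℝ) 1 by constructor <;> norm_num)]
    with r hr
  exact arsinh_le_ellK hr.1.le hr.2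

lemma mu_tendsto_zero : Tendsto mu (nhdsWithin 1 (Iio (1:ℝ))) (nhds 0) := by
  have hnum : Tendsto (fun r : ℝ => (Real.pi/2) * ellK (Real.sqrt (1 - r^2)))
      (nhdsWithin 1 (Iio (1:ℝ))) (nhds ((Real.pi/2) * ellK 0)) := by
    apply Tendsto.const_mul
    exact ((ellK_continuousAt (by norm_num)).tendsto).comp
      (sqrt_one_sub_sq_tendsto.mono_right nhdsWithin_le_nhds)
  exact hnum.div_atTop ellK_tendsto_atTop

lemma mu_tendsto_atTop : Tendsto mu (nhdsWithin 0 (Ioi (0:ℝ))) atTop := by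
  have hsq : Tendsto (fun r : ℝ => Real.sqrt (1 - r^2))
      (nhdsWithin 0 (Ioi (0:ℝ))) (nhdsWithin 1 (Iio (1:ℝ))) := by
    rw [tendsto_nhdsWithin_iff]
    constructor
    · have hc : Continuous (fun r : ℝ => Real.sqrt (1 - r^2)) := by fun_prop
      have h10 : Real.sqrt (1 - (0:ℝ)^2) = 1 := by norm_num
      have := hc.tendsto 0
      rw [h10] at this
      exact this.mono_left nhdsWithin_le_nhds
    · filter_upwards [Ioo_mem_nhdsGT_of_mem (show (0:ℝ) ∈ Ico (0:ℝ) 1 by constructor <;> norm_num)]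
        with r hr
      exact (sqrt_mem_Ioo hr).2
  have hnum : Tendsto (fun r : ℝ => (Real.pi/2) * ellK (Real.sqrt (1 - r^2)))
      (nhdsWithin 0 (Ioi (0:ℝ))) atTop :=
    (ellK_tendsto_atTop.comp hsq).const_mul_atTop (by positivity)
  have hden : Tendsto (fun r : ℝ => (ellK r)⁻¹) (nhdsWithin 0 (Ioi (0:ℝ)))
      (nhds (ellK 0)⁻¹) := by
    exact (((ellK_continuousAt (by norm_num)).tendsto).mono_left nhdsWithin_le_nhds).inv₀
      (ellK_pos (by norm_num)).ne'
  have h0 : (0:ℝ) < (ellK 0)⁻¹ := inv_pos.mpr (ellK_pos (by norm_num))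
  have := hnum.atTop_mul_pos h0 hden
  refine this.congr fun r => ?_
  rw [mu, div_eq_mul_inv]
  ring

lemma mu_surj {y : ℝ} (hy : 0 < y) : ∃ r ∈ Ioo (0:ℝ) 1, mu r = y := by
  have hA : ∀ᶠ r in nhdsWithin 0 (Ioi (0:ℝ)), y < mu r := mu_tendsto_atTop.eventually_gt_atTop y
  have hA' : ∀ᶠ r in nhdsWithin 0 (Ioi (0:ℝ)), r ∈ Ioo (0:ℝ) 1 :=
    Ioo_mem_nhdsGT_of_mem (show (0:ℝ) ∈ Ico (0:ℝ) 1 by constructor <;> norm_num)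
  obtain ⟨a, haY, haI⟩ := (hA.and hA').exists
  have hB : ∀ᶠ r in nhdsWithin 1 (Iio (1:ℝ)), mu r < y := by
    have := mu_tendsto_zero.eventually (eventually_lt_nhds hy)
    exact this
  have hB' : ∀ᶠ r in nhdsWithin 1 (Iio (1:ℝ)), r ∈ Ioo (0:ℝ) 1 :=
    Ioo_mem_nhdsLT_of_mem (show (1:ℝ) ∈ Ioc (0:ℝ) 1 by constructor <;> norm_num)
  obtain ⟨b, hbY, hbI⟩ := (hB.and hB').exists
  have hsub : uIcc a b ⊆ Ioo (0:ℝ) 1 := (ordConnected_Ioo).uIcc_subset haI hbI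
  have hcont : ContinuousOn mu (uIcc a b) := fun x hx =>
    (mu_continuousAt (hsub hx)).continuousWithinAt
  have hmem : y ∈ uIcc (mu a) (mu b) := by
    rw [Set.mem_uIcc]
    right
    exact ⟨hbY.le, haY.le⟩
  obtain ⟨x, hx, hxy⟩ := intermediate_value_uIcc hcont hmem
  exact ⟨x, hsub hx, hxy⟩

lemma muInv_spec {y : ℝ} (hy : 0 < y) : muInv y ∈ Ioo (0:ℝ) 1 ∧ mu (muInv y) = y := by
  obtain ⟨s, hs, hsy⟩ := mu_surj hy
  exact ⟨Function.invFunOn_mem ⟨s, hs, hsy⟩, Function.invFunOn_eq ⟨s, hs, hsy⟩⟩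

lemma muInv_eq {s : ℝ} (hs : s ∈ Ioo (0:ℝ) 1) {y : ℝ} (hy : mu s = y) : muInv y = s := by
  have hy0 : 0 < y := hy ▸ mu_pos hs
  obtain ⟨hmem, heq⟩ := muInv_spec hy0
  exact mu_strictAnti.injOn hmem hs (heq.trans hy.symm)

theorem phi_sq_add (r : ℝ) (hr : r ∈ Set.Icc (0:ℝ) 1) (K : ℝ) (hK : 0 < K) :
    (phi K r)^2 + (phi (1/K) (Real.sqrt (1 - r^2)))^2 = 1 := by
  obtain ⟨hr0, hr1⟩ := hr
  rcases eq_or_lt_of_le hr0 with h0 | h0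
  · -- r = 0
    rw [← h0]
    norm_num [phi]
  rcases eq_or_lt_of_le hr1 with h1 | h1
  · -- r = 1
    rw [h1]
    norm_num [phi]
  -- interior case
  have hrI : r ∈ Ioo (0:ℝ) 1 := ⟨h0, h1⟩
  set r' := Real.sqrt (1 - r^2) with hr'def
  have hr'I : r' ∈ Ioo (0:ℝ) 1 := sqrt_mem_Ioo hrI
  have hrr' : Real.sqrt (1 - r'^2) = r := sqrt_sqrt_self h0.le h1.le
  have hmr : 0 < mu r := mu_pos hrI
  have hmr' : 0 < mu r' := mu_pos hr'I
  have hy : 0 < mu r / K := div_pos hmr hK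
  obtain ⟨hsI, hs⟩ := muInv_spec hy
  set s := muInv (mu r / K) with hsdef
  have hphi1 : phi K r = s := by
    rw [phi, if_neg (ne_of_gt h0), if_neg (ne_of_lt h1)]
  set s' := Real.sqrt (1 - s^2) with hs'def
  have hs'I : s' ∈ Ioo (0:ℝ) 1 := sqrt_mem_Ioo hsI
  have hms' : mu s * mu s' = (Real.pi/2)^2 := mu_mul hsI
  have hmrr' : mu r * mu r' = (Real.pi/2)^2 := mu_mul hrI
  have hms : 0 < mu s := mu_pos hsI
  have hkey : mu s' = mu r' / (1/K) := by
    have h : mu s * mu s' = mu r * mu r' := hms'.trans hmrr'.symm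
    rw [hs] at h
    rw [one_div, div_inv_eq_mul]
    field_simp at h
    nlinarith [h]
  have hphi2 : phi (1/K) r' = s' := by
    rw [phi, if_neg (ne_of_gt hr'I.1), if_neg (ne_of_lt hr'I.2)]
    exact muInv_eq hs'I hkey
  rw [hphi1, hphi2, hs'def, Real.sq_sqrt (by nlinarith [hsI.1, hsI.2])]
  ring
end

section
/- For r in (0,1), with α = r² and β = φ_{1/3}(r)², the Legendre–Jacobi modular equation of order 3 holds: (αβ)^{1/4} + ((1−α)(1−β))^{1/4} = 1. -/
open Real Set intervalIntegral

namespace ME3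

/-- The larger squared modulus in the degree-3 parametrization. -/
noncomputable def AA (m : ℝ) : ℝ := (m-1)*(m+3)^3/(16*m^3)

/-- The smaller squared modulus in the degree-3 parametrization. -/
noncomputable def BB (m : ℝ) : ℝ := (m-1)^3*(m+3)/(16*m)

/-- Numerator of the degree-3 substitution. -/
noncomputable def NN (m y : ℝ) : ℝ := y*(4*m+(m-1)^2*y^2)

/-- Denominator of the degree-3 substitution. -/
noncomputable def DD (m y : ℝ) : ℝ := 4+(m-1)*(m+3)*y^2

/-- The degree-3 rational substitution. -/
noncomputable def hh (m y : ℝ) : ℝ := NN m y / DD m y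

lemma DD_pos {m : ℝ} (hm1 : 1 < m) (y : ℝ) : 0 < DD m y := by
  have h := mul_nonneg (mul_nonneg (by linarith : (0:ℝ) ≤ m-1)
    (by linarith : (0:ℝ) ≤ m+3)) (sq_nonneg y)
  unfold DD; nlinarith

lemma NN_nonneg {m : ℝ} (hm1 : 1 < m) {y : ℝ} (hy : 0 ≤ y) : 0 ≤ NN m y := by
  have h1 := mul_nonneg hy (sq_nonneg ((m-1)*y))
  have h2 := mul_nonneg hy (by linarith : (0:ℝ) ≤ 4*m)
  unfold NN; nlinarith

lemma DD_sub_NN {m y : ℝ} : DD m y - NN m y = (1-y)*((m-1)*y-2)^2 := by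
  unfold DD NN; ring

lemma DD_add_NN {m y : ℝ} : DD m y + NN m y = (1+y)*((m-1)*y+2)^2 := by
  unfold DD NN; ring

lemma Q_pos {m y : ℝ} (hm1 : 1 < m) (hm3 : m < 3) (hy0 : 0 ≤ y) (hy1 : y ≤ 1) :
    0 < 4-(m-1)^2*y^2 := by
  have h1 : 0 ≤ (m-1)*y := mul_nonneg (by linarith) hy0
  have h2 : (m-1)*y < 2 := by nlinarith
  nlinarith [mul_pos (by linarith : (0:ℝ) < 2-(m-1)*y) (by linarith : (0:ℝ) < 2+(m-1)*y)]

lemma P_pos {m y : ℝ} (hm1 : 1 < m) (hm3 : m < 3) (hy0 : 0 ≤ y) (hy1 : y ≤ 1) :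
    0 < 4*m-(m-1)*(m+3)*y^2 := by
  have h0 : (0:ℝ) ≤ 1 - y^2 := by nlinarith [mul_nonneg (by linarith : (0:ℝ) ≤ 1-y) (by linarith : (0:ℝ) ≤ 1+y)]
  nlinarith [mul_nonneg (mul_nonneg (by linarith : (0:ℝ) ≤ m-1) (by linarith : (0:ℝ) ≤ m+3)) h0,
    mul_pos (by linarith : (0:ℝ) < 3-m) (by linarith : (0:ℝ) < m+1)]

lemma hh_nonneg {m : ℝ} (hm1 : 1 < m) {y : ℝ} (hy : 0 ≤ y) : 0 ≤ hh m y :=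
  div_nonneg (NN_nonneg hm1 hy) (DD_pos hm1 y).le

lemma hh_lt_one {m y : ℝ} (hm1 : 1 < m) (hm3 : m < 3) (hy0 : 0 ≤ y) (hy1 : y < 1) :
    hh m y < 1 := by
  have hD := DD_pos hm1 y
  rw [hh, div_lt_one hD, ← sub_pos, DD_sub_NN]
  have h2 : (m-1)*y - 2 < 0 := by nlinarith
  have h3 : 0 < ((m-1)*y-2)^2 := by nlinarith [mul_pos (neg_pos.2 h2) (neg_pos.2 h2)]
  exact mul_pos (by linarith) h3

lemma hh_one {m : ℝ} (hm : m ≠ -1) : hh m 1 = 1 := by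
  have h1 : NN m 1 = (m+1)^2 := by unfold NN; ring
  have h2 : DD m 1 = (m+1)^2 := by unfold DD; ring
  have h3 : m + 1 ≠ 0 := fun h => hm (by linarith)
  rw [hh, h1, h2, div_self (pow_ne_zero 2 h3)]

lemma one_sub_hh_sq {m y : ℝ} (hm1 : 1 < m) :
    1 - hh m y ^ 2 = (1-y^2) * ((4-(m-1)^2*y^2)/DD m y)^2 := by
  have hD := (DD_pos hm1 y).ne'
  rw [hh]
  field_simp
  unfold NN DD
  ring

lemma one_sub_AA_hh_sq {m y : ℝ} (hm1 : 1 < m) :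
    1 - AA m * hh m y ^ 2
      = (1 - BB m * y^2) * ((4*m-(m-1)*(m+3)*y^2)/(m * DD m y))^2 := by
  have hD := (DD_pos hm1 y).ne'
  have hm0 : m ≠ 0 := by linarith
  rw [hh, AA, BB]
  field_simp
  unfold NN DD
  ring

lemma hasDerivAt_hh {m : ℝ} (hm1 : 1 < m) (y : ℝ) :
    HasDerivAt (hh m)
      ((4-(m-1)^2*y^2)*(4*m-(m-1)*(m+3)*y^2)/(DD m y)^2) y := by
  have hD := (DD_pos hm1 y).ne'
  have hN : HasDerivAt (fun x : ℝ => x*(4*m+(m-1)^2*x^2)) (4*m + 3*(m-1)^2*y^2) y := by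
    have h := (hasDerivAt_id y).mul
      (((hasDerivAt_pow 2 y).const_mul ((m-1)^2)).const_add (4*m))
    refine h.congr_deriv ?_
    simp only [id_eq]
    push_cast
    ring
  have hDd : HasDerivAt (fun x : ℝ => 4+(m-1)*(m+3)*x^2) (2*(m-1)*(m+3)*y) y := by
    have h := ((hasDerivAt_pow 2 y).const_mul ((m-1)*(m+3))).const_add 4
    refine h.congr_deriv ?_
    push_cast
    ring
  have h := hN.div hDd (by unfold DD at hD; exact hD)
  have heq : hh m = fun x : ℝ => (x*(4*m+(m-1)^2*x^2))/(4+(m-1)*(m+3)*x^2) := by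
    funext x; rw [hh, NN, DD]
  rw [heq]
  refine h.congr_deriv ?_
  unfold DD
  have hD2 : 4+(m-1)*(m+3)*y^2 ≠ 0 := by unfold DD at hD; exact hD
  field_simp
  ring

/-- The integrand of the complete elliptic integral, with squared modulus `a`. -/
noncomputable def ff (a θ : ℝ) : ℝ := 1 / Real.sqrt (1 - a * Real.sin θ ^ 2)

lemma one_sub_mul_sin_sq_pos {a : ℝ} (h0 : 0 ≤ a) (h1 : a < 1) (θ : ℝ) :
    0 < 1 - a * Real.sin θ ^ 2 := by
  nlinarith [Real.sin_sq_le_one θ, sq_nonneg (Real.sin θ)]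

lemma ff_pos {a : ℝ} (h0 : 0 ≤ a) (h1 : a < 1) (θ : ℝ) : 0 < ff a θ := by
  have := one_sub_mul_sin_sq_pos h0 h1 θ
  rw [ff]; positivity

lemma continuous_ff {a : ℝ} (h0 : 0 ≤ a) (h1 : a < 1) : Continuous (ff a) := by
  apply continuous_const.div
  · exact Real.continuous_sqrt.comp
      (continuous_const.sub (continuous_const.mul (Real.continuous_sin.pow 2)))
  · intro θ
    exact (Real.sqrt_pos.2 (one_sub_mul_sin_sq_pos h0 h1 θ)).ne'

lemma intervalIntegrable_ff {a : ℝ} (h0 : 0 ≤ a) (h1 : a < 1) (c d : ℝ) :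
    IntervalIntegrable (ff a) MeasureTheory.volume c d :=
  (continuous_ff h0 h1).intervalIntegrable c d

lemma ellK_sqrt_eq {a : ℝ} (h0 : 0 ≤ a) :
    ellK (Real.sqrt a) = ∫ θ in (0:ℝ)..(π/2), ff a θ := by
  unfold ellK ff
  rw [Real.sq_sqrt h0]

lemma ellK_sqrt_pos {a : ℝ} (h0 : 0 ≤ a) (h1 : a < 1) : 0 < ellK (Real.sqrt a) := by
  rw [ellK_sqrt_eq h0]
  exact intervalIntegral_pos_of_pos_on (intervalIntegrable_ff h0 h1 _ _)
    (fun θ _ => ff_pos h0 h1 θ) (by positivity)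

lemma AA_mem {m : ℝ} (hm1 : 1 < m) (hm3 : m < 3) : AA m ∈ Set.Ioo (0:ℝ) 1 := by
  have hm0 : (0:ℝ) < m := by linarith
  have hden : (0:ℝ) < 16*m^3 := by positivity
  constructor
  · exact div_pos (mul_pos (by linarith) (pow_pos (by linarith) 3)) hden
  · rw [AA, div_lt_one hden]
    nlinarith [mul_pos (mul_pos (mul_pos (by linarith : (0:ℝ) < 3-m)
      (by linarith : (0:ℝ) < 3-m)) (by linarith : (0:ℝ) < 3-m)) (by linarith : (0:ℝ) < m+1)]

lemma BB_mem {m : ℝ} (hm1 : 1 < m) (hm3 : m < 3) : BB m ∈ Set.Ioo (0:ℝ) 1 := by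
  have hm0 : (0:ℝ) < m := by linarith
  have hden : (0:ℝ) < 16*m := by positivity
  constructor
  · exact div_pos (mul_pos (pow_pos (by linarith) 3) (by linarith)) hden
  · rw [BB, div_lt_one hden]
    nlinarith [mul_pos (mul_pos (mul_pos (by linarith : (0:ℝ) < 3-m)
      (by linarith : (0:ℝ) < m+1)) (by linarith : (0:ℝ) < m+1)) (by linarith : (0:ℝ) < m+1)]


/-- Key lemma: the degree-3 transformation of complete elliptic integrals. -/
lemma keyK {m : ℝ} (hm1 : 1 < m) (hm3 : m < 3) :
    (∫ θ in (0:ℝ)..(π/2), ff (AA m) θ) = m * ∫ θ in (0:ℝ)..(π/2), ff (BB m) θ := by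
  obtain ⟨hA0, hA1⟩ := AA_mem hm1 hm3
  obtain ⟨hB0, hB1⟩ := BB_mem hm1 hm3
  have hm0 : (0:ℝ) < m := by linarith
  have hpi : (0:ℝ) < π/2 := by positivity
  set T : ℝ → ℝ := fun t => Real.arcsin (hh m (Real.sin t)) with hTdef
  set F : ℝ → ℝ := fun u => ∫ θ in (0:ℝ)..u, ff (AA m) θ with hFdef
  set G : ℝ → ℝ := fun u => m * ∫ θ in (0:ℝ)..u, ff (BB m) θ with hGdef
  have hcontF : Continuous F :=
    intervalIntegral.continuous_primitive (intervalIntegrable_ff hA0.le hA1) 0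
  have hcontG : Continuous G := continuous_const.mul
    (intervalIntegral.continuous_primitive (intervalIntegrable_ff hB0.le hB1) 0)
  have hconth : Continuous (hh m) := by
    apply Continuous.div
    · exact continuous_id.mul (continuous_const.add (continuous_const.mul (continuous_pow 2)))
    · exact continuous_const.add (continuous_const.mul (continuous_pow 2))
    · exact fun y => (DD_pos hm1 y).ne'
  have hcontT : Continuous T :=
    Real.continuous_arcsin.comp (hconth.comp Real.continuous_sin)
  -- the common right-derivative
  have main : ∀ t ∈ Icc (0:ℝ) (π/2), F (T t) = G t := by
    apply eq_of_has_deriv_right_eq (f' := fun t => m * ff (BB m) t)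
    · -- derivative of F ∘ T
      intro t ht
      obtain ⟨ht0, ht2⟩ := ht
      -- basic facts about y = sin t
      set y := Real.sin t with hy
      have hy0 : 0 ≤ y := Real.sin_nonneg_of_nonneg_of_le_pi ht0 (by linarith [Real.pi_pos])
      have hy1 : y < 1 := by
        have := Real.strictMonoOn_sin (a := t) (b := π/2)
          ⟨by linarith, by linarith⟩ ⟨by linarith, le_refl _⟩ ht2
        simpa using this
      have hy2 : y^2 ≤ 1 := by nlinarith
      have hDp := DD_pos hm1 y
      have hQp := Q_pos hm1 hm3 hy0 hy1.le
      have hPp := P_pos hm1 hm3 hy0 hy1.le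
      have hh0 : 0 ≤ hh m y := hh_nonneg hm1 hy0
      have hh1 : hh m y < 1 := hh_lt_one hm1 hm3 hy0 hy1
      have hy2p : (0:ℝ) < 1 - y^2 := by nlinarith
      have hBy : (0:ℝ) < 1 - BB m * y^2 := by nlinarith
      -- derivative of T at t
      have hsin : HasDerivAt Real.sin (Real.cos t) t := Real.hasDerivAt_sin t
      have hhh := (hasDerivAt_hh hm1 y).comp t hsin
      have harc := Real.hasDerivAt_arcsin
        (by linarith : hh m y ≠ -1) (ne_of_lt hh1)
      have hT : HasDerivAt T
          (1 / Real.sqrt (1 - hh m y ^ 2) *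
            ((4-(m-1)^2*y^2)*(4*m-(m-1)*(m+3)*y^2)/(DD m y)^2 * Real.cos t)) t :=
        by have := harc.comp t hhh; exact this
      -- derivative of F at T t
      have hFd : HasDerivAt F (ff (AA m) (T t)) (T t) :=
        intervalIntegral.integral_hasDerivAt_right
          (intervalIntegrable_ff hA0.le hA1 _ _)
          ((continuous_ff hA0.le hA1).stronglyMeasurable.stronglyMeasurableAtFilter)
          (continuous_ff hA0.le hA1).continuousAt
      have hcomp := hFd.comp t hT
      -- now rewrite the derivative value
      have hsinT : Real.sin (T t) = hh m y := Real.sin_arcsin (by linarith) hh1.le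
      have hcos : Real.cos t = Real.sqrt (1 - y^2) := by
        rw [← Real.sqrt_sq (Real.cos_nonneg_of_mem_Icc ⟨by linarith, by linarith⟩),
          Real.cos_sq']
      have hs1 : Real.sqrt (1 - hh m y ^ 2)
          = Real.sqrt (1-y^2) * ((4-(m-1)^2*y^2)/DD m y) := by
        rw [one_sub_hh_sq hm1, Real.sqrt_mul (by linarith), Real.sqrt_sq (by positivity)]
      have hs2 : Real.sqrt (1 - AA m * hh m y ^ 2)
          = Real.sqrt (1 - BB m * y^2) * ((4*m-(m-1)*(m+3)*y^2)/(m * DD m y)) := by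
        rw [one_sub_AA_hh_sq hm1, Real.sqrt_mul (by linarith), Real.sqrt_sq (by positivity)]
      have hval : ff (AA m) (T t) *
          (1 / Real.sqrt (1 - hh m y ^ 2) *
            ((4-(m-1)^2*y^2)*(4*m-(m-1)*(m+3)*y^2)/(DD m y)^2 * Real.cos t))
          = m * ff (BB m) t := by
        rw [ff, ff, hsinT, ← hy, hs2, hcos, hs1]
        have e1 : Real.sqrt (1 - BB m * y^2) > 0 := Real.sqrt_pos.2 hBy
        have e2 : Real.sqrt (1 - y^2) > 0 := Real.sqrt_pos.2 hy2p
        field_simp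
        apply div_self; apply mul_ne_zero <;> intro h <;> nlinarith
      rw [hval] at hcomp
      exact hcomp.hasDerivWithinAt
    · -- derivative of G
      intro t ht
      have hGd : HasDerivAt G (m * ff (BB m) t) t := by
        apply HasDerivAt.const_mul
        exact intervalIntegral.integral_hasDerivAt_right
          (intervalIntegrable_ff hB0.le hB1 _ _)
          ((continuous_ff hB0.le hB1).stronglyMeasurable.stronglyMeasurableAtFilter)
          (continuous_ff hB0.le hB1).continuousAt
      exact hGd.hasDerivWithinAt
    · exact (hcontF.comp hcontT).continuousOn
    · exact hcontG.continuousOn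
    · -- equality at 0
      have : T 0 = 0 := by
        simp [hTdef, hh, NN]
      simp [this, hFdef, hGdef]
  have hT2 : T (π/2) = π/2 := by
    rw [hTdef]
    simp only []
    rw [Real.sin_pi_div_two, hh_one (by linarith), Real.arcsin_one]
  have := main (π/2) ⟨hpi.le, le_refl _⟩
  rw [hT2] at this
  exact this


lemma intK_pos {a : ℝ} (h0 : 0 ≤ a) (h1 : a < 1) :
    0 < ∫ θ in (0:ℝ)..(π/2), ff a θ :=
  intervalIntegral_pos_of_pos_on (intervalIntegrable_ff h0 h1 _ _)
    (fun θ _ => ff_pos h0 h1 θ) (by positivity)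

lemma intK_lt {a b : ℝ} (ha : 0 ≤ a) (hab : a < b) (hb : b < 1) :
    (∫ θ in (0:ℝ)..(π/2), ff a θ) < ∫ θ in (0:ℝ)..(π/2), ff b θ := by
  have hia := intervalIntegrable_ff ha (lt_trans hab hb) 0 (π/2)
  have hib := intervalIntegrable_ff (le_trans ha hab.le) hb 0 (π/2)
  have h : 0 < ∫ θ in (0:ℝ)..(π/2), (ff b θ - ff a θ) := by
    apply intervalIntegral_pos_of_pos_on (hib.sub hia) _ (by positivity)
    intro θ hθ
    have hsp : 0 < Real.sin θ :=
      Real.sin_pos_of_pos_of_lt_pi hθ.1 (by linarith [Real.pi_pos, hθ.2])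
    have h1 : 0 < 1 - b * Real.sin θ ^ 2 :=
      one_sub_mul_sin_sq_pos (le_trans ha hab.le) hb θ
    have h2 : 1 - b * Real.sin θ ^ 2 < 1 - a * Real.sin θ ^ 2 := by nlinarith [mul_pos (sub_pos.2 hab) (mul_pos hsp hsp)]
    have h3 : Real.sqrt (1 - b * Real.sin θ ^ 2) < Real.sqrt (1 - a * Real.sin θ ^ 2) :=
      Real.sqrt_lt_sqrt h1.le h2
    have := one_div_lt_one_div_of_lt (Real.sqrt_pos.2 h1) h3
    rw [ff, ff]
    linarith
  rw [intervalIntegral.integral_sub hib hia] at h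
  linarith

lemma ellK_eq_int (r : ℝ) : ellK r = ∫ θ in (0:ℝ)..(π/2), ff (r^2) θ := rfl

lemma mu_sqrt {a : ℝ} (h0 : 0 < a) (h1 : a < 1) :
    mu (Real.sqrt a) = (π/2) * (∫ θ in (0:ℝ)..(π/2), ff (1-a) θ)
      / (∫ θ in (0:ℝ)..(π/2), ff a θ) := by
  rw [mu, Real.sq_sqrt h0.le, ellK_sqrt_eq (by linarith : (0:ℝ) ≤ 1-a), ellK_sqrt_eq h0.le]

lemma mu_strictAnti : StrictAntiOn mu (Set.Ioo (0:ℝ) 1) := by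
  intro r1 h1 r2 h2 h12
  obtain ⟨h10, h11⟩ := h1
  obtain ⟨h20, h21⟩ := h2
  have hsq1 : (0:ℝ) < r1^2 := by positivity
  have hsq12 : r1^2 < r2^2 := by nlinarith
  have hsq2 : r2^2 < 1 := by nlinarith
  have hK1 : 0 < ellK r1 := by rw [ellK_eq_int]; exact intK_pos hsq1.le (lt_trans hsq12 hsq2)
  have hK2 : 0 < ellK r2 := by rw [ellK_eq_int]; exact intK_pos (by positivity) hsq2
  have hKlt : ellK r1 < ellK r2 := by
    rw [ellK_eq_int, ellK_eq_int]; exact intK_lt hsq1.le hsq12 hsq2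
  have hK1' : 0 < ellK (Real.sqrt (1-r1^2)) :=
    ellK_sqrt_pos (by nlinarith) (by nlinarith)
  have hK2' : ellK (Real.sqrt (1-r2^2)) < ellK (Real.sqrt (1-r1^2)) := by
    rw [ellK_sqrt_eq (by nlinarith : (0:ℝ) ≤ 1-r2^2),
      ellK_sqrt_eq (by nlinarith : (0:ℝ) ≤ 1-r1^2)]
    exact intK_lt (by nlinarith) (by nlinarith) (by nlinarith)
  rw [mu, mu, div_lt_div_iff₀ hK2 hK1]
  have hpi : (0:ℝ) < π/2 := by positivity
  have hK2'0 : 0 ≤ ellK (Real.sqrt (1-r2^2)) := by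
    rw [ellK_sqrt_eq (by nlinarith : (0:ℝ) ≤ 1-r2^2)]
    exact (intK_pos (by nlinarith) (by nlinarith)).le
  calc π/2 * ellK (Real.sqrt (1-r2^2)) * ellK r1
      < π/2 * ellK (Real.sqrt (1-r1^2)) * ellK r2 := by
        apply mul_lt_mul'' _ hKlt (by positivity) hK1.le
        exact mul_lt_mul_of_pos_left hK2' hpi

lemma muB_eq_three_muA {m : ℝ} (hm1 : 1 < m) (hm3 : m < 3) :
    mu (Real.sqrt (BB m)) = 3 * mu (Real.sqrt (AA m)) := by
  obtain ⟨hA0, hA1⟩ := AA_mem hm1 hm3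
  obtain ⟨hB0, hB1⟩ := BB_mem hm1 hm3
  have hm0 : (0:ℝ) < m := by linarith
  have hm1' : 1 < 3/m := (one_lt_div hm0).2 hm3
  have hm3' : 3/m < 3 := by rw [div_lt_iff₀ hm0]; nlinarith
  have hAe : AA (3/m) = 1 - BB m := by
    rw [AA, BB]; field_simp; ring
  have hBe : BB (3/m) = 1 - AA m := by
    rw [AA, BB]; field_simp; ring
  have k1 := keyK hm1 hm3
  have k2 := keyK hm1' hm3'
  rw [hAe, hBe] at k2
  have hIA : 0 < ∫ θ in (0:ℝ)..(π/2), ff (AA m) θ := intK_pos hA0.le hA1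
  have hIB : 0 < ∫ θ in (0:ℝ)..(π/2), ff (BB m) θ := intK_pos hB0.le hB1
  rw [mu_sqrt hB0 hB1, mu_sqrt hA0 hA1, k2, k1]
  rw [div_eq_iff (by positivity), eq_comm]
  field_simp

end ME3

theorem modular_equation_order_three (r : ℝ) (hr : r ∈ Set.Ioo (0:ℝ) 1) :
    (r^2 * (phi (1/3) r)^2) ^ ((1:ℝ)/4) +
      ((1 - r^2) * (1 - (phi (1/3) r)^2)) ^ ((1:ℝ)/4) = 1 := by
  open ME3 Real in
  obtain ⟨hr0, hr1⟩ := hr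
  -- find the parameter m with AA m = r^2
  have hAAfun : ME3.AA = fun m : ℝ => (m-1)*(m+3)^3/(16*m^3) := rfl
  have hcont : ContinuousOn ME3.AA (Set.Icc 1 3) := by
    rw [hAAfun]
    apply ContinuousOn.div
    · exact (by continuity : Continuous fun m : ℝ => (m-1)*(m+3)^3).continuousOn
    · exact (by continuity : Continuous fun m : ℝ => 16*m^3).continuousOn
    · intro x hx
      have : (0:ℝ) < x := lt_of_lt_of_le one_pos hx.1
      positivity
  have hA1 : ME3.AA 1 = 0 := by rw [ME3.AA]; norm_num
  have hA3 : ME3.AA 3 = 1 := by rw [ME3.AA]; norm_num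
  have hmem : r^2 ∈ Set.Ioo (ME3.AA 1) (ME3.AA 3) := by
    rw [hA1, hA3]
    constructor
    · positivity
    · nlinarith
  obtain ⟨m, hmIoo, hAm⟩ := intermediate_value_Ioo (by norm_num : (1:ℝ) ≤ 3) hcont hmem
  obtain ⟨hm1, hm3⟩ := hmIoo
  obtain ⟨hA0, hA1'⟩ := ME3.AA_mem hm1 hm3
  obtain ⟨hB0, hB1'⟩ := ME3.BB_mem hm1 hm3
  have hm0 : (0:ℝ) < m := by linarith
  -- r = sqrt (AA m)
  have hrA : r = Real.sqrt (ME3.AA m) := by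
    rw [hAm, Real.sqrt_sq hr0.le]
  -- s = sqrt (BB m)
  set s : ℝ := Real.sqrt (ME3.BB m) with hs
  have hsmem : s ∈ Set.Ioo (0:ℝ) 1 := by
    constructor
    · exact Real.sqrt_pos.2 hB0
    · calc s < Real.sqrt 1 := Real.sqrt_lt_sqrt hB0.le hB1'
        _ = 1 := Real.sqrt_one
  have hmus : mu s = 3 * mu r := by
    rw [hrA, hs]
    exact ME3.muB_eq_three_muA hm1 hm3
  -- unfold phi
  have hphi : phi (1/3) r = muInv (mu r / (1/3)) := by
    rw [phi, if_neg (ne_of_gt hr0), if_neg (ne_of_lt hr1)]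
  have hdiv : mu r / (1/3) = 3 * mu r := by ring
  have hex : ∃ a ∈ Set.Ioo (0:ℝ) 1, mu a = mu r / (1/3) :=
    ⟨s, hsmem, hmus.trans hdiv.symm⟩
  have ht_mem : muInv (mu r / (1/3)) ∈ Set.Ioo (0:ℝ) 1 :=
    Function.invFunOn_mem hex
  have ht_eq : mu (muInv (mu r / (1/3))) = mu r / (1/3) :=
    Function.invFunOn_eq hex
  have hts : phi (1/3) r = s := by
    rw [hphi]
    exact ME3.mu_strictAnti.injOn ht_mem hsmem
      (ht_eq.trans (hdiv.trans hmus.symm))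
  rw [hts, ← hAm]
  have hssq : s^2 = ME3.BB m := Real.sq_sqrt hB0.le
  rw [hssq]
  -- the algebraic modular identity
  have e1 : ME3.AA m * ME3.BB m = ((m-1)*(m+3)/(4*m))^4 := by
    rw [ME3.AA, ME3.BB]; field_simp; ring
  have e2 : (1 - ME3.AA m)*(1 - ME3.BB m) = ((3-m)*(m+1)/(4*m))^4 := by
    rw [ME3.AA, ME3.BB]; field_simp; ring
  have h4 : ∀ x : ℝ, 0 ≤ x → (x^4) ^ ((1:ℝ)/4) = x := by
    intro x hx
    rw [← Real.rpow_natCast x 4, ← Real.rpow_mul hx]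
    norm_num
  have p1 : (0:ℝ) ≤ (m-1)*(m+3)/(4*m) := by
    apply div_nonneg _ (by linarith)
    apply mul_nonneg <;> linarith
  have p2 : (0:ℝ) ≤ (3-m)*(m+1)/(4*m) := by
    apply div_nonneg _ (by linarith)
    apply mul_nonneg <;> linarith
  rw [e1, e2, h4 _ p1, h4 _ p2]
  field_simp
  ring
end

section
/- For a, r in (0,1): F(1+a,2−a;2;1−r)·F(a,1−a;1;r) + F(1+a,2−a;2;r)·F(a,1−a;1;1−r) = sin(πa)/(π·a·(1−a)·r·(1−r)). -/
noncomputable def GaussF (a b c x : ℝ) : ℝ :=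
  ∑' n : ℕ, ((ascPochhammer ℝ n).eval a * (ascPochhammer ℝ n).eval b /
    ((ascPochhammer ℝ n).eval c * n.factorial)) * x ^ n



namespace Elliott

open Real Filter Topology Finset


noncomputable def GaussF (a b c x : ℝ) : ℝ :=
  ∑' n : ℕ, ((ascPochhammer ℝ n).eval a * (ascPochhammer ℝ n).eval b /
    ((ascPochhammer ℝ n).eval c * n.factorial)) * x ^ n



noncomputable def P (x : ℝ) (n : ℕ) : ℝ := (ascPochhammer ℝ n).eval x

lemma P_zero (x : ℝ) : P x 0 = 1 := by simp [P]

lemma P_succ (x : ℝ) (n : ℕ) : P x (n + 1) = P x n * (x + n) :=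
  ascPochhammer_succ_eval n x

lemma P_succ_left (x : ℝ) (n : ℕ) : P x (n + 1) = x * P (x + 1) n := by
  unfold P
  rw [ascPochhammer_succ_left, Polynomial.eval_mul, Polynomial.eval_X, Polynomial.eval_comp,
    Polynomial.eval_add, Polynomial.eval_X, Polynomial.eval_one]

lemma P_pos {x : ℝ} (hx : 0 < x) : ∀ n, 0 < P x n
  | 0 => by rw [P_zero]; norm_num
  | (n + 1) => by
      rw [P_succ]
      exact mul_pos (P_pos hx n) (by positivity)

lemma P_one (n : ℕ) : P 1 n = n.factorial := by
  simpa [P] using ascPochhammer_eval_one ℝ n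

lemma P_two (n : ℕ) : P 2 n = (n + 1).factorial := by
  have h := P_succ_left 1 n
  rw [P_one] at h
  norm_num at h
  rw [← h]

lemma P_eq_prod (x : ℝ) (n : ℕ) : P x n = ∏ j ∈ range n, (x + j) := by
  induction n with
  | zero => simp [P_zero]
  | succ n ih => rw [P_succ, ih, prod_range_succ]

/-- The coefficients of `F(a, 1-a; 1; x)`. -/
noncomputable def c (a : ℝ) (n : ℕ) : ℝ := P a n * P (1 - a) n / (n.factorial : ℝ) ^ 2

lemma c_def (a : ℝ) (n : ℕ) : c a n = P a n * P (1 - a) n / (n.factorial : ℝ) ^ 2 := rfl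

section
variable {a : ℝ} (ha : 0 < a) (ha1 : a < 1)

include ha ha1

lemma c_pos (n : ℕ) : 0 < c a n := by
  have h1 : (0:ℝ) < 1 - a := by linarith
  have := P_pos ha n
  have := P_pos h1 n
  have := n.factorial_pos
  unfold c
  positivity

lemma c_rec (n : ℕ) :
    ((n : ℝ) + 1) ^ 2 * c a (n + 1) = ((n : ℝ) ^ 2 + n + a * (1 - a)) * c a n := by
  unfold c
  rw [P_succ, P_succ]
  have hf : ((n + 1).factorial : ℝ) = ((n : ℝ) + 1) * n.factorial := by
    rw [Nat.factorial_succ]; push_cast; ring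
  rw [hf]
  have hfn : (n.factorial : ℝ) ≠ 0 := Nat.cast_ne_zero.mpr n.factorial_ne_zero
  have hn1 : ((n : ℝ) + 1) ≠ 0 := by positivity
  field_simp
  ring

lemma c_zero' : c a 0 = 1 := by simp [c, P_zero]

lemma c_one' : c a 1 = a * (1 - a) := by
  have := c_rec ha ha1 0
  rw [c_zero' ha ha1] at this
  push_cast at this
  linarith

lemma c_le_one : ∀ n, c a n ≤ 1 := by
  intro n
  induction n with
  | zero => rw [c_zero' ha ha1]
  | succ n ih =>
    have hrec := c_rec ha ha1 n
    have hcp := c_pos ha ha1 n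
    have h2 : ((n : ℝ) + 1) ^ 2 * c a (n + 1) ≤ ((n : ℝ) + 1) ^ 2 * 1 := by
      rw [hrec]
      nlinarith [hcp, Nat.cast_nonneg (α := ℝ) n, ih, mul_pos ha (show (0:ℝ) < 1 - a by linarith)]
    exact le_of_mul_le_mul_left h2 (by positivity)

end



/-- Generic summability: coefficients bounded by `(n+3)^3` give a summable power series
on `(-1,1)`. -/
lemma summable_cube {b : ℕ → ℝ} {x : ℝ} (hx : |x| < 1)
    (hb : ∀ n, |b n| ≤ ((n : ℝ) + 3) ^ 3) : Summable fun n => b n * x ^ n := by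
  apply Summable.of_norm
  have hx' : ‖|x|‖ < 1 := by rwa [Real.norm_eq_abs, abs_abs]
  have h3 : Summable fun n : ℕ => ((n : ℝ) + 3) ^ 3 * |x| ^ n := by
    have s3 := summable_pow_mul_geometric_of_norm_lt_one (R := ℝ) 3 hx'
    have s2 := summable_pow_mul_geometric_of_norm_lt_one (R := ℝ) 2 hx'
    have s1 := summable_pow_mul_geometric_of_norm_lt_one (R := ℝ) 1 hx'
    have s0 := summable_pow_mul_geometric_of_norm_lt_one (R := ℝ) 0 hx'
    have := ((s3.add (s2.mul_left 9)).add ((s1.mul_left 27).add (s0.mul_left 27)))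
    apply this.congr
    intro n
    push_cast
    ring
  apply Summable.of_nonneg_of_le (fun n => norm_nonneg _) _ h3
  intro n
  rw [norm_mul, norm_pow, Real.norm_eq_abs, Real.norm_eq_abs]
  have h1 : |x| ^ n ≤ 1 * |x| ^ n := by rw [one_mul]
  calc |b n| * |x| ^ n ≤ ((n : ℝ) + 3) ^ 3 * |x| ^ n := by
        apply mul_le_mul_of_nonneg_right (hb n) (by positivity)
    _ = _ := rfl


lemma summable_shift_pow (k : ℕ) {r : ℝ} (h0 : 0 < r) (hr : r < 1) :
    Summable fun n : ℕ => ((n : ℝ) + 3) ^ k * r ^ n := by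
  have hr' : ‖r‖ < 1 := by rwa [Real.norm_eq_abs, abs_of_pos h0]
  have h := summable_pow_mul_geometric_of_norm_lt_one (R := ℝ) k hr'
  have h2 := (summable_nat_add_iff (f := fun m : ℕ => (m : ℝ) ^ k * r ^ m) 3).2 h
  have h3 := h2.mul_left ((r ^ 3)⁻¹)
  apply h3.congr
  intro n
  have hc : ((n + 3 : ℕ) : ℝ) = (n : ℝ) + 3 := by push_cast; ring
  have hp : r ^ (n + 3) = r ^ n * r ^ 3 := by rw [pow_add]
  rw [hc, hp]
  have : (r ^ 3) ≠ 0 := by positivity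
  field_simp

/-- Termwise differentiation for power series with polynomially bounded coefficients. -/
lemma hasDerivAt_series {b : ℕ → ℝ} (hb : ∀ n, |b n| ≤ ((n : ℝ) + 3) ^ 3) {x : ℝ}
    (hx : |x| < 1) :
    HasDerivAt (fun y => ∑' n, b n * y ^ n)
      (∑' n : ℕ, ((n : ℝ) + 1) * b (n + 1) * x ^ n) x := by
  set ρ : ℝ := (1 + |x|) / 2 with hρ
  have hxρ : |x| < ρ := by rw [hρ]; linarith [abs_nonneg x]
  have hρ0 : 0 < ρ := lt_of_le_of_lt (abs_nonneg x) hxρ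
  have hρ1 : ρ < 1 := by rw [hρ]; linarith
  set u : ℕ → ℝ := fun n => ρ⁻¹ * (((n : ℝ) + 3) ^ 4 * ρ ^ n) with hu
  have husum : Summable u := (summable_shift_pow 4 hρ0 hρ1).mul_left _
  have hbound : ∀ (n : ℕ), ∀ y : ℝ, |y| ≤ ρ →
      ‖b n * ((n : ℝ) * y ^ (n - 1))‖ ≤ u n := by
    intro n y hyρ
    have hy0 : (0:ℝ) ≤ |y| := abs_nonneg y
    rw [norm_mul, norm_mul, Real.norm_eq_abs, Real.norm_eq_abs, Real.norm_eq_abs, abs_pow]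
    match n with
    | 0 => simp only [Nat.cast_zero, abs_zero, zero_mul, mul_zero]; positivity
    | (m + 1) =>
      have h1 : |y| ^ (m + 1 - 1) ≤ ρ ^ m := by
        simpa using pow_le_pow_left₀ hy0 hyρ m
      have hbn := hb (m + 1)
      have hbn0 : (0:ℝ) ≤ |b (m+1)| := abs_nonneg _
      have hcast : |((m + 1 : ℕ) : ℝ)| = |((m:ℝ) + 1)| := by push_cast; rfl
      rw [hcast]
      have key : |b (m + 1)| * (|((m:ℝ) + 1)| * |y| ^ (m + 1 - 1)) ≤
          (((m:ℝ) + 1) + 3) ^ 3 * (((m:ℝ) + 1) * ρ ^ m) := by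
        have hm1 : |((m:ℝ) + 1)| = (m:ℝ) + 1 := abs_of_pos (by positivity)
        rw [hm1]
        have := mul_le_mul hbn (mul_le_mul_of_nonneg_left h1 (by positivity : (0:ℝ) ≤ (m:ℝ)+1))
          (by positivity) (by positivity)
        push_cast at this ⊢
        linarith
      refine key.trans ?_
      rw [hu]
      have hρm : (0:ℝ) < ρ ^ m := by positivity
      have : ρ⁻¹ * ((((m:ℝ) + 1) + 3) ^ 4 * ρ ^ (m + 1)) =
          (((m:ℝ) + 1) + 3) ^ 4 * ρ ^ m := by
        rw [pow_succ]; field_simp; ring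
      push_cast [this]
      nlinarith [pow_pos hρ0 m, Nat.cast_nonneg (α := ℝ) m,
        pow_nonneg (show (0:ℝ) ≤ (m:ℝ)+4 by positivity) 3]
  have hderiv : ∀ (n : ℕ), ∀ y ∈ Metric.ball (0:ℝ) ρ,
      HasDerivAt (fun z => b n * z ^ n) (b n * ((n : ℝ) * y ^ (n - 1))) y :=
    fun n y _ => (hasDerivAt_pow n y).const_mul (b n)
  have hx' : x ∈ Metric.ball (0:ℝ) ρ := by
    rw [Metric.mem_ball, Real.dist_eq, sub_zero]; exact hxρ
  have H := hasDerivAt_tsum_of_isPreconnected husum Metric.isOpen_ball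
    (convex_ball (0:ℝ) ρ).isPreconnected hderiv
    (fun n y hy => hbound n y (by rw [Metric.mem_ball, Real.dist_eq, sub_zero] at hy; exact hy.le))
    hx' ?_ hx'
  · -- reindex the derivative sum
    have hsum' : Summable fun n : ℕ => b n * ((n : ℝ) * x ^ (n - 1)) := by
      apply Summable.of_norm
      exact Summable.of_nonneg_of_le (fun n => norm_nonneg _)
        (fun n => hbound n x hxρ.le) husum
    have := Summable.tsum_eq_zero_add hsum'
    norm_num at this
    rw [this] at H
    exact H.congr_deriv (tsum_congr fun n => by ring)
  · -- summability at x
    apply Summable.of_norm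
    have h3 : Summable fun n : ℕ => ((n : ℝ) + 3) ^ 3 * ρ ^ n := summable_shift_pow 3 hρ0 hρ1
    apply Summable.of_nonneg_of_le (fun n => norm_nonneg _) _ h3
    intro n
    rw [norm_mul, Real.norm_eq_abs, Real.norm_eq_abs, abs_pow]
    have : |x| ^ n ≤ ρ ^ n := pow_le_pow_left₀ (abs_nonneg x) hxρ.le n
    exact mul_le_mul (hb n) this (by positivity) (by positivity)



noncomputable def g0 (a x : ℝ) (n : ℕ) : ℝ := c a n * x ^ n
noncomputable def g1 (a x : ℝ) (n : ℕ) : ℝ := (((n : ℝ) + 1) * c a (n + 1)) * x ^ n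
noncomputable def g2 (a x : ℝ) (n : ℕ) : ℝ :=
  ((((n : ℝ) + 2) * ((n : ℝ) + 1)) * c a (n + 2)) * x ^ n
noncomputable def s1 (a x : ℝ) (n : ℕ) : ℝ := (((n : ℝ) + 1) ^ 2 * c a (n + 1)) * x ^ n
noncomputable def s2 (a x : ℝ) (n : ℕ) : ℝ := (((n : ℝ) * ((n : ℝ) + 1)) * c a n) * x ^ n

noncomputable def u0 (a x : ℝ) : ℝ := ∑' n : ℕ, g0 a x n
noncomputable def u1 (a x : ℝ) : ℝ := ∑' n : ℕ, g1 a x n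
noncomputable def u2 (a x : ℝ) : ℝ := ∑' n : ℕ, g2 a x n

section
variable {a : ℝ} (ha : 0 < a) (ha1 : a < 1)

lemma cube_ge (n : ℕ) (y : ℝ) (hy : 0 ≤ y) (hy' : y ≤ ((n:ℝ)+2) * ((n:ℝ)+2)) :
    y ≤ ((n : ℝ) + 3) ^ 3 := by
  nlinarith [Nat.cast_nonneg (α := ℝ) n]

include ha ha1

lemma hb0 : ∀ n : ℕ, |c a n| ≤ ((n : ℝ) + 3) ^ 3 := by
  intro n
  rw [abs_of_pos (c_pos ha ha1 n)]
  refine cube_ge n _ (c_pos ha ha1 n).le ?_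
  have := c_le_one ha ha1 n
  nlinarith [Nat.cast_nonneg (α := ℝ) n]

lemma hb1 : ∀ n : ℕ, |((n : ℝ) + 1) * c a (n + 1)| ≤ ((n : ℝ) + 3) ^ 3 := by
  intro n
  have h1 := c_pos ha ha1 (n + 1)
  have h2 := c_le_one ha ha1 (n + 1)
  have hn := Nat.cast_nonneg (α := ℝ) n
  rw [abs_of_pos (by positivity)]
  refine cube_ge n _ (by positivity) ?_
  nlinarith
lemma hbs1 : ∀ n : ℕ, |((n : ℝ) + 1) ^ 2 * c a (n + 1)| ≤ ((n : ℝ) + 3) ^ 3 := by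
  intro n
  have h1 := c_pos ha ha1 (n + 1)
  have h2 := c_le_one ha ha1 (n + 1)
  have hn := Nat.cast_nonneg (α := ℝ) n
  rw [abs_of_pos (by positivity)]
  refine cube_ge n _ (by positivity) ?_
  nlinarith
lemma hbs2 : ∀ n : ℕ, |((n : ℝ) * ((n : ℝ) + 1)) * c a n| ≤ ((n : ℝ) + 3) ^ 3 := by
  intro n
  have h1 := c_pos ha ha1 n
  have h2 := c_le_one ha ha1 n
  have hn := Nat.cast_nonneg (α := ℝ) n
  rw [abs_of_nonneg (by positivity)]
  refine cube_ge n _ (by positivity) ?_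
  nlinarith
lemma hb2 : ∀ n : ℕ, |(((n : ℝ) + 2) * ((n : ℝ) + 1)) * c a (n + 2)| ≤ ((n : ℝ) + 3) ^ 3 := by
  intro n
  have h1 := c_pos ha ha1 (n + 2)
  have h2 := c_le_one ha ha1 (n + 2)
  have hn := Nat.cast_nonneg (α := ℝ) n
  rw [abs_of_pos (by positivity)]
  refine cube_ge n _ (by positivity) ?_
  nlinarith

lemma sum_g0 {x : ℝ} (hx : |x| < 1) : Summable (g0 a x) := summable_cube hx (hb0 ha ha1)
lemma sum_g1 {x : ℝ} (hx : |x| < 1) : Summable (g1 a x) := summable_cube hx (hb1 ha ha1)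
lemma sum_g2 {x : ℝ} (hx : |x| < 1) : Summable (g2 a x) := summable_cube hx (hb2 ha ha1)
lemma sum_s1 {x : ℝ} (hx : |x| < 1) : Summable (s1 a x) := summable_cube hx (hbs1 ha ha1)
lemma sum_s2 {x : ℝ} (hx : |x| < 1) : Summable (s2 a x) := summable_cube hx (hbs2 ha ha1)

lemma hasDerivAt_u0 {x : ℝ} (hx : |x| < 1) : HasDerivAt (u0 a) (u1 a x) x := by
  have h := hasDerivAt_series (hb0 ha ha1) hx
  have he : (∑' n : ℕ, ((n : ℝ) + 1) * c a (n + 1) * x ^ n) = u1 a x := by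
    apply tsum_congr; intro n; unfold g1; ring
  rw [he] at h
  exact h

lemma hasDerivAt_u1 {x : ℝ} (hx : |x| < 1) : HasDerivAt (u1 a) (u2 a x) x := by
  have h := hasDerivAt_series (b := fun n : ℕ => ((n : ℝ) + 1) * c a (n + 1)) (hb1 ha ha1) hx
  have hfe : (fun y : ℝ => ∑' n : ℕ, (((n : ℝ) + 1) * c a (n + 1)) * y ^ n) = u1 a := by
    funext y; apply tsum_congr; intro n; unfold g1; ring
  have he : (∑' n : ℕ, ((n : ℝ) + 1) * ((((n + 1 : ℕ) : ℝ) + 1) * c a ((n + 1) + 1)) * x ^ n)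
      = u2 a x := by
    apply tsum_congr; intro n; unfold g2; push_cast; ring
  rw [hfe, he] at h
  exact h

/-- The hypergeometric ODE. -/
lemma ode {x : ℝ} (hx : |x| < 1) :
    x * (1 - x) * u2 a x + (1 - 2 * x) * u1 a x = a * (1 - a) * u0 a x := by
  have S0 := sum_g0 ha ha1 (x := x) hx
  have S1 := sum_g1 ha ha1 (x := x) hx
  have S2 := sum_g2 ha ha1 (x := x) hx
  have Ss1 := sum_s1 ha ha1 (x := x) hx
  have Ss2 := sum_s2 ha ha1 (x := x) hx
  -- claim 1 : x * u2 + u1 = ∑ s1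
  have claim1 : x * u2 a x + u1 a x = ∑' n, s1 a x n := by
    have t1 : ∑' n, s1 a x n = s1 a x 0 + ∑' n, s1 a x (n + 1) := Summable.tsum_eq_zero_add Ss1
    have t2 : ∑' n, g1 a x n = g1 a x 0 + ∑' n, g1 a x (n + 1) := Summable.tsum_eq_zero_add S1
    have hsh1 : Summable fun n => g1 a x (n + 1) := (summable_nat_add_iff 1).2 S1
    have hx2 : Summable fun n => x * g2 a x n := S2.mul_left x
    have t3 : ∑' n, s1 a x (n + 1) = (∑' n, x * g2 a x n) + ∑' n, g1 a x (n + 1) := by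
      rw [← Summable.tsum_add hx2 hsh1]
      apply tsum_congr; intro n
      unfold s1 g1 g2; push_cast; ring
    have t4 : ∑' n, x * g2 a x n = x * u2 a x := tsum_mul_left
    have t5 : s1 a x 0 = g1 a x 0 := by unfold s1 g1; norm_num
    have t6 : u1 a x = ∑' n, g1 a x n := rfl
    rw [t6, t2, t1, t3, t4, t5]
    ring
  -- claim 2 : x^2 * u2 + 2 * x * u1 = ∑ s2
  have claim2 : x ^ 2 * u2 a x + 2 * x * u1 a x = ∑' n, s2 a x n := by
    have sh1 : Summable fun n => s2 a x (n + 1) := (summable_nat_add_iff 1).2 Ss2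
    have sh2 : Summable fun n => s2 a x (n + 2) := (summable_nat_add_iff 2).2 Ss2
    have t1 : ∑' n, s2 a x n = s2 a x 0 + ∑' n, s2 a x (n + 1) := Summable.tsum_eq_zero_add Ss2
    have t2 : ∑' n, s2 a x (n + 1) = s2 a x 1 + ∑' n, s2 a x (n + 1 + 1) := by
      have := Summable.tsum_eq_zero_add sh1
      simpa using this
    have hg1sh : Summable fun n => g1 a x (n + 1) := (summable_nat_add_iff 1).2 S1
    have t3 : ∑' n, g1 a x n = g1 a x 0 + ∑' n, g1 a x (n + 1) := Summable.tsum_eq_zero_add S1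
    have hx2 : Summable fun n => x ^ 2 * g2 a x n := S2.mul_left (x ^ 2)
    have h2x : Summable fun n => 2 * x * g1 a x (n + 1) := hg1sh.mul_left (2 * x)
    have t4 : ∑' n, s2 a x (n + 1 + 1)
        = (∑' n, x ^ 2 * g2 a x n) + ∑' n, 2 * x * g1 a x (n + 1) := by
      rw [← Summable.tsum_add hx2 h2x]
      apply tsum_congr; intro n
      unfold s2 g1 g2; push_cast; ring
    have t5 : ∑' n, x ^ 2 * g2 a x n = x ^ 2 * u2 a x := tsum_mul_left
    have t6 : ∑' n, 2 * x * g1 a x (n + 1) = 2 * x * ∑' n, g1 a x (n + 1) := tsum_mul_left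
    have t7 : s2 a x 0 = 0 := by unfold s2; norm_num
    have t8 : s2 a x 1 = 2 * x * g1 a x 0 := by unfold s2 g1; norm_num; ring
    have t9 : u1 a x = ∑' n, g1 a x n := rfl
    rw [t1, t2, t4, t5, t6, t7, t8, t9, t3]
    ring
  -- claim 3 : ∑ s1 = ∑ s2 + a (1-a) u0
  have claim3 : ∑' n, s1 a x n = (∑' n, s2 a x n) + a * (1 - a) * u0 a x := by
    have hterm : ∀ n : ℕ, s1 a x n = s2 a x n + a * (1 - a) * g0 a x n := by
      intro n
      unfold s1 s2 g0
      have h := c_rec ha ha1 n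
      linear_combination x ^ n * h
    have hsum : Summable fun n => a * (1 - a) * g0 a x n := S0.mul_left _
    calc ∑' n, s1 a x n = ∑' n, (s2 a x n + a * (1 - a) * g0 a x n) := tsum_congr hterm
      _ = (∑' n, s2 a x n) + ∑' n, a * (1 - a) * g0 a x n := Summable.tsum_add Ss2 hsum
      _ = (∑' n, s2 a x n) + a * (1 - a) * u0 a x := by rw [tsum_mul_left]; rfl
  have final : x * u2 a x + u1 a x
      = (x ^ 2 * u2 a x + 2 * x * u1 a x) + a * (1 - a) * u0 a x := by
    rw [claim1, claim2, claim3]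
  linarith [final]

end

/-- Abel-type lemma: if `b n → L` then `(1-x) ∑ b n x^n → L` as `x → 1⁻`. -/
lemma abel_aux {b : ℕ → ℝ} {L : ℝ} (hb : Tendsto b atTop (𝓝 L))
    (hs : ∀ x : ℝ, |x| < 1 → Summable fun n => b n * x ^ n) :
    Tendsto (fun x => (1 - x) * ∑' n, b n * x ^ n) (𝓝[<] (1:ℝ)) (𝓝 L) := by
  set b' : ℕ → ℝ := fun n => Nat.casesOn n 0 (fun m => b m) with hb'
  set f : ℕ → ℝ := fun n => b n - b' n with hf
  have hps : ∀ n, ∑ i ∈ range (n + 1), f i = b n := by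
    intro n
    induction n with
    | zero => simp [hf, hb']
    | succ n ih => rw [sum_range_succ, ih]; simp [hf, hb']
  have hps' : Tendsto (fun n => ∑ i ∈ range (n + 1), f i) atTop (𝓝 L) := by
    simp_rw [hps]; exact hb
  have hpartial : Tendsto (fun n => ∑ i ∈ range n, f i) atTop (𝓝 L) :=
    (tendsto_add_atTop_iff_nat 1).1 hps'
  have key := Real.tendsto_tsum_powerSeries_nhdsWithin_lt hpartial
  apply key.congr'
  have hmem : Set.Ioo (-1 : ℝ) 1 ∈ 𝓝[<] (1:ℝ) :=
    Ioo_mem_nhdsLT_of_mem (by norm_num : (1:ℝ) ∈ Set.Ioc (-1:ℝ) 1)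
  filter_upwards [hmem] with x hx
  have hx1 : |x| < 1 := abs_lt.2 ⟨hx.1, hx.2⟩
  have hsb := hs x hx1
  have hsb' : Summable fun n => b' n * x ^ n := by
    apply (summable_nat_add_iff 1).1
    apply ((hsb.mul_left x).congr)
    intro n
    show x * (b n * x ^ n) = b' (n + 1) * x ^ (n + 1)
    simp [hb', pow_succ]
    ring
  have e1 : ∑' n, f n * x ^ n = (∑' n, b n * x ^ n) - ∑' n, b' n * x ^ n := by
    rw [← Summable.tsum_sub hsb hsb']
    apply tsum_congr; intro n; rw [hf]; ring
  have e2 : ∑' n, b' n * x ^ n = x * ∑' n, b n * x ^ n := by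
    rw [Summable.tsum_eq_zero_add hsb']
    have : (fun n : ℕ => b' (n + 1) * x ^ (n + 1)) = fun n => x * (b n * x ^ n) := by
      funext n; simp [hb', pow_succ]; ring
    rw [show b' 0 * x ^ 0 = 0 by simp [hb'], zero_add, this, tsum_mul_left]
  rw [e1, e2]
  ring



section
variable {a : ℝ} (ha : 0 < a) (ha1 : a < 1)
include ha ha1

lemma tendsto_nc : Tendsto (fun n : ℕ => ((n : ℝ) + 1) * c a (n + 1)) atTop
    (𝓝 (Real.sin (π * a) / π)) := by
  have h1a : (0:ℝ) < 1 - a := by linarith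
  have hGa := Real.GammaSeq_tendsto_Gamma a
  have hGb := Real.GammaSeq_tendsto_Gamma (1 - a)
  have hΓa := Real.Gamma_pos_of_pos ha
  have hΓb := Real.Gamma_pos_of_pos h1a
  have hne : Real.Gamma a * Real.Gamma (1 - a) ≠ 0 := by positivity
  have hmain : Tendsto (fun n : ℕ => ((n:ℝ) / ((n:ℝ) + 1)) *
      (Real.GammaSeq a n * Real.GammaSeq (1 - a) n)⁻¹) atTop
      (𝓝 (Real.sin (π * a) / π)) := by
    have h1 : Tendsto (fun n : ℕ => ((n:ℝ) / ((n:ℝ) + 1))) atTop (𝓝 1) :=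
      tendsto_natCast_div_add_atTop (1 : ℝ)
    have h2 := ((hGa.mul hGb).inv₀ hne)
    have := h1.mul h2
    rw [one_mul, Real.Gamma_mul_Gamma_one_sub, inv_div] at this
    exact this
  apply hmain.congr'
  filter_upwards [eventually_ge_atTop 1] with n hn
  have hn0 : (0:ℝ) < (n:ℝ) := by exact_mod_cast hn
  have hPa := P_pos ha (n + 1)
  have hPb := P_pos h1a (n + 1)
  have hfac : (0:ℝ) < (n.factorial : ℝ) := by exact_mod_cast n.factorial_pos
  have hGaEq : Real.GammaSeq a n = (n:ℝ) ^ a * n.factorial / P a (n + 1) := by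
    rw [Real.GammaSeq, P_eq_prod]
  have hGbEq : Real.GammaSeq (1 - a) n = (n:ℝ) ^ (1 - a) * n.factorial / P (1 - a) (n + 1) := by
    rw [Real.GammaSeq, P_eq_prod]
  have hrpow : (n:ℝ) ^ a * (n:ℝ) ^ (1 - a) = (n:ℝ) := by
    rw [← Real.rpow_add hn0]
    norm_num
  have hcv : c a (n + 1) = P a (n + 1) * P (1 - a) (n + 1) / ((n + 1).factorial : ℝ) ^ 2 :=
    c_def a (n + 1)
  have hfs : ((n + 1).factorial : ℝ) = ((n:ℝ) + 1) * n.factorial := by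
    rw [Nat.factorial_succ]; push_cast; ring
  rw [hGaEq, hGbEq, hcv, hfs]
  have hrp : (0:ℝ) < (n:ℝ) ^ a := Real.rpow_pos_of_pos hn0 a
  have hrp' : (0:ℝ) < (n:ℝ) ^ (1 - a) := Real.rpow_pos_of_pos hn0 (1 - a)
  field_simp
  linear_combination (-1:ℝ) * hrpow

end
-- Part H: Wronskian, constancy, limits, final theorem
section
variable {a : ℝ} (ha : 0 < a) (ha1 : a < 1)

noncomputable def w (a : ℝ) : ℝ → ℝ :=
  fun s => s * (1 - s) * (u1 a (1 - s) * u0 a s + u1 a s * u0 a (1 - s))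

include ha ha1

lemma hasDerivAt_w {r : ℝ} (hr : r ∈ Set.Ioo (0:ℝ) 1) : HasDerivAt (w a) 0 r := by
  have hr1 : |r| < 1 := abs_lt.2 ⟨by linarith [hr.1], hr.2⟩
  have h1r : |1 - r| < 1 := abs_lt.2 ⟨by linarith [hr.2], by linarith [hr.1]⟩
  have hinner : HasDerivAt (fun s : ℝ => 1 - s) (-1) r := (hasDerivAt_id r).const_sub 1
  have d0 : HasDerivAt (u0 a) (u1 a r) r := hasDerivAt_u0 ha ha1 hr1
  have d1 : HasDerivAt (u1 a) (u2 a r) r := hasDerivAt_u1 ha ha1 hr1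
  have d0' : HasDerivAt (fun s => u0 a (1 - s)) (u1 a (1 - r) * (-1)) r :=
    (hasDerivAt_u0 ha ha1 h1r).comp r hinner
  have d1' : HasDerivAt (fun s => u1 a (1 - s)) (u2 a (1 - r) * (-1)) r :=
    (hasDerivAt_u1 ha ha1 h1r).comp r hinner
  have hP : HasDerivAt (fun s : ℝ => s * (1 - s)) (1 * (1 - r) + r * (-1)) r :=
    (hasDerivAt_id r).mul hinner
  have hQ := (d1'.mul d0).add (d1.mul d0')
  have htot := hP.mul hQ
  have hode1 := ode ha ha1 hr1
  have hode2 := ode ha ha1 h1r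
  have h11 : 1 - (1 - r) = r := by ring
  rw [h11] at hode2
  exact htot.congr_deriv (by simp only [Pi.mul_apply, Pi.add_apply]; linear_combination (-1:ℝ) * (u0 a r * hode2 - u0 a (1 - r) * hode1))

lemma w_eq {r s : ℝ} (hr : r ∈ Set.Ioo (0:ℝ) 1) (hs : s ∈ Set.Ioo (0:ℝ) 1) :
    w a r = w a s := by
  wlog h : r ≤ s generalizing r s
  · exact (this hs hr (le_of_not_ge h)).symm
  have hsub : Set.Icc r s ⊆ Set.Ioo (0:ℝ) 1 :=
    fun x hx => ⟨lt_of_lt_of_le hr.1 hx.1, lt_of_le_of_lt hx.2 hs.2⟩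
  have key := constant_of_has_deriv_right_zero (f := w a) (a := r) (b := s)
    (fun x hx => ((hasDerivAt_w ha ha1 (hsub hx)).continuousAt).continuousWithinAt)
    (fun x hx => ((hasDerivAt_w ha ha1 (hsub (Set.Ico_subset_Icc_self hx))).hasDerivWithinAt))
  exact (key s (Set.right_mem_Icc.2 h)).symm

lemma tendsto_c_zero : Tendsto (fun n : ℕ => c a n) atTop (𝓝 0) := by
  have h := (tendsto_nc ha ha1).mul tendsto_one_div_add_atTop_nhds_zero_nat
  rw [mul_zero] at h
  have h2 : Tendsto (fun n : ℕ => c a (n + 1)) atTop (𝓝 0) := by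
    apply h.congr
    intro n
    have : ((n:ℝ) + 1) ≠ 0 := by positivity
    field_simp
  exact (tendsto_add_atTop_iff_nat 1).1 h2

omit ha ha1 in
lemma u0_zero : u0 a 0 = 1 := by
  unfold u0 g0
  rw [tsum_eq_single 0 (fun n hn => by simp [zero_pow hn])]
  simp [c, P_zero]

lemma abel_u0 : Tendsto (fun x => (1 - x) * u0 a x) (𝓝[<] (1:ℝ)) (𝓝 0) :=
  abel_aux (tendsto_c_zero ha ha1) (fun x hx => sum_g0 ha ha1 hx)

lemma abel_u1 : Tendsto (fun x => (1 - x) * u1 a x) (𝓝[<] (1:ℝ))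
    (𝓝 (Real.sin (π * a) / π)) :=
  abel_aux (tendsto_nc ha ha1) (fun x hx => sum_g1 ha ha1 hx)

lemma tendsto_w : Tendsto (w a) (𝓝[>] (0:ℝ)) (𝓝 (Real.sin (π * a) / π)) := by
  have hmap : Tendsto (fun r : ℝ => 1 - r) (𝓝[>] (0:ℝ)) (𝓝[<] (1:ℝ)) := by
    apply tendsto_nhdsWithin_of_tendsto_nhds_of_eventually_within
    · have : Tendsto (fun r : ℝ => 1 - r) (𝓝 (0:ℝ)) (𝓝 (1 - 0)) :=
        (continuous_const.sub continuous_id).tendsto 0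
      rw [sub_zero] at this
      exact this.mono_left nhdsWithin_le_nhds
    · filter_upwards [self_mem_nhdsWithin] with x hx
      simp only [Set.mem_Iio]
      simp only [Set.mem_Ioi] at hx
      linarith
  have hA : Tendsto (fun r : ℝ => r * u1 a (1 - r)) (𝓝[>] (0:ℝ))
      (𝓝 (Real.sin (π * a) / π)) := by
    have := (abel_u1 ha ha1).comp hmap
    apply this.congr
    intro r
    simp [Function.comp]
  have hB : Tendsto (fun r : ℝ => r * u0 a (1 - r)) (𝓝[>] (0:ℝ)) (𝓝 0) := by
    have := (abel_u0 ha ha1).comp hmap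
    apply this.congr
    intro r
    simp [Function.comp]
  have h01 : |(0:ℝ)| < 1 := by norm_num
  have hu0 : Tendsto (u0 a) (𝓝[>] (0:ℝ)) (𝓝 1) := by
    have h := (hasDerivAt_u0 ha ha1 h01).continuousAt.tendsto.mono_left
      (nhdsWithin_le_nhds (s := Set.Ioi (0:ℝ)))
    rwa [u0_zero] at h
  have hu1 : Tendsto (u1 a) (𝓝[>] (0:ℝ)) (𝓝 (u1 a 0)) :=
    (hasDerivAt_u1 ha ha1 h01).continuousAt.tendsto.mono_left
      (nhdsWithin_le_nhds (s := Set.Ioi (0:ℝ)))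
  have hconst : Tendsto (fun r : ℝ => 1 - r) (𝓝[>] (0:ℝ)) (𝓝 1) := by
    have : Tendsto (fun r : ℝ => 1 - r) (𝓝 (0:ℝ)) (𝓝 (1 - 0)) :=
      (continuous_const.sub continuous_id).tendsto 0
    rw [sub_zero] at this
    exact this.mono_left nhdsWithin_le_nhds
  have T := (hA.mul (hconst.mul hu0)).add ((hconst.mul hu1).mul hB)
  norm_num at T
  apply T.congr
  intro r
  unfold w
  ring

lemma w_value {r : ℝ} (hr : r ∈ Set.Ioo (0:ℝ) 1) : w a r = Real.sin (π * a) / π := by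
  have hev : (fun _ : ℝ => w a r) =ᶠ[𝓝[>] (0:ℝ)] w a := by
    filter_upwards [Ioo_mem_nhdsGT_of_mem
      (show (0:ℝ) ∈ Set.Ico (0:ℝ) 1 by constructor <;> norm_num)] with s hs
    exact w_eq ha ha1 hr hs
  exact tendsto_nhds_unique (tendsto_const_nhds.congr' hev) (tendsto_w ha ha1)

omit ha ha1 in
lemma gauss1 {x : ℝ} : GaussF a (1 - a) 1 x = u0 a x := by
  unfold GaussF u0 g0
  apply tsum_congr
  intro n
  rw [show c a n = P a n * P (1 - a) n / (n.factorial : ℝ) ^ 2 from rfl]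
  have : (ascPochhammer ℝ n).eval (1:ℝ) = (n.factorial : ℝ) := ascPochhammer_eval_one ℝ n
  show (ascPochhammer ℝ n).eval a * (ascPochhammer ℝ n).eval (1-a) /
      ((ascPochhammer ℝ n).eval 1 * n.factorial) * x ^ n = _
  rw [this]
  unfold P
  rw [pow_two]

lemma gauss2 {x : ℝ} : a * (1 - a) * GaussF (1 + a) (2 - a) 2 x = u1 a x := by
  unfold GaussF u1
  rw [← tsum_mul_left]
  apply tsum_congr
  intro n
  have e1 : P a (n + 1) = a * P (a + 1) n := P_succ_left a n
  have e2 : P (1 - a) (n + 1) = (1 - a) * P ((1 - a) + 1) n := P_succ_left (1 - a) n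
  have e3 : P 2 n = ((n + 1).factorial : ℝ) := P_two n
  have hfs : ((n + 1).factorial : ℝ) = ((n:ℝ) + 1) * n.factorial := by
    rw [Nat.factorial_succ]; push_cast; ring
  have hgterm : (ascPochhammer ℝ n).eval (1 + a) * (ascPochhammer ℝ n).eval (2 - a) /
      ((ascPochhammer ℝ n).eval 2 * n.factorial) = P (1 + a) n * P (2 - a) n /
      (P 2 n * n.factorial) := rfl
  show a * (1 - a) * (P (1 + a) n * P (2 - a) n / (P 2 n * n.factorial) * x ^ n)
      = g1 a x n
  unfold g1
  rw [show c a (n + 1) = P a (n + 1) * P (1 - a) (n + 1) / ((n + 1).factorial : ℝ) ^ 2 from rfl]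
  rw [show (1 + a) = a + 1 by ring] at *
  rw [show (2 - a : ℝ) = (1 - a) + 1 by ring] at *
  rw [e3, hfs, e1, e2]
  have h1 : (n.factorial : ℝ) ≠ 0 := Nat.cast_ne_zero.mpr n.factorial_ne_zero
  have h2 : ((n:ℝ) + 1) ≠ 0 := by positivity
  field_simp

end

end Elliott

theorem hypergeometric_identity (a r : ℝ) (ha : a ∈ Set.Ioo (0:ℝ) 1)
    (hr : r ∈ Set.Ioo (0:ℝ) 1) :
    GaussF (1+a) (2-a) 2 (1-r) * GaussF a (1-a) 1 r +
      GaussF (1+a) (2-a) 2 r * GaussF a (1-a) 1 (1-r) =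
    Real.sin (Real.pi * a) / (Real.pi * a * (1-a) * r * (1-r)) := by
  obtain ⟨ha0, ha1⟩ := ha
  obtain ⟨hr0, hr1⟩ := hr
  have hane : a ≠ 0 := ne_of_gt ha0
  have h1ane : 1 - a ≠ 0 := by intro h; apply hane; linarith
  have haa : a * (1 - a) ≠ 0 := mul_ne_zero hane h1ane
  have hrne : r ≠ 0 := ne_of_gt hr0
  have h1rne : 1 - r ≠ 0 := by intro h; apply hrne; linarith
  have hpi : Real.pi ≠ 0 := Real.pi_ne_zero
  have hg1r : GaussF a (1-a) 1 r = Elliott.u0 a r := Elliott.gauss1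
  have hg1r' : GaussF a (1-a) 1 (1-r) = Elliott.u0 a (1-r) := Elliott.gauss1
  have hg2r : a * (1-a) * GaussF (1+a) (2-a) 2 r = Elliott.u1 a r := Elliott.gauss2 ha0 ha1
  have hg2r' : a * (1-a) * GaussF (1+a) (2-a) 2 (1-r) = Elliott.u1 a (1-r) := Elliott.gauss2 ha0 ha1
  have hw := Elliott.w_value ha0 ha1 (Set.mem_Ioo.2 ⟨hr0, hr1⟩)
  unfold Elliott.w at hw
  rw [hg1r, hg1r']
  have e2r : GaussF (1+a) (2-a) 2 r = Elliott.u1 a r / (a * (1-a)) := by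
    rw [← hg2r]; field_simp
  have e2r' : GaussF (1+a) (2-a) 2 (1-r) = Elliott.u1 a (1-r) / (a * (1-a)) := by
    rw [← hg2r']; field_simp
  rw [e2r, e2r']
  rw [eq_div_iff (by positivity : Real.pi * a * (1-a) * r * (1-r) ≠ 0)]
  have hw2 := hw
  rw [eq_div_iff hpi] at hw2
  set S := Real.sin (Real.pi * a) with hS
  field_simp
  linear_combination hw2
end
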